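/- arXiv:1706.05644 — 7 statements merged into one kernel-verified Lean document; each statement's English description precedes it below -/
import Mathlib

section
/- Suppose q is a real-valued function on {α−1+s : s = 0,1,…,b+1} and f : ℝ → ℝ. If y : T_b → ℝ satisfies the discrete fractional boundary value problem Δ^{α}y(t) + q(t+α−1)·f(y(t+α−1)) = 0 for t = 0,1,…,b+1 together with y(α−2) = 0 and y(α+b+1) = 0, then y(t) = Σ_{s=0}^{b+1} G(t,s)·q(s+α−1)·f(y(s+α−1)) for every t ∈ T_b. -/
/-- Falling power `x^[y] = Γ(x+1)/Γ(x-y+1)`; it equals 0 when `x-y+1` is a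
nonpositive integer since `Real.Gamma` vanishes there (and division by zero is zero). -/
noncomputable def fp (x y : ℝ) : ℝ := Real.Gamma (x + 1) / Real.Gamma (x - y + 1)

/-- The Green function `G(t,s)` of the discrete fractional boundary value problem,
for `t ∈ T_b` (a real number) and an integer `s ∈ {0,1,…,b+1}`. -/
noncomputable def G (α : ℝ) (b : ℕ) (t : ℝ) (s : ℕ) : ℝ :=
  if (s : ℝ) ≤ t - α + 1 then
    1 / Real.Gamma α *
      (fp t (α - 1) * fp (α + b - s) (α - 1) / fp (α + b + 1) (α - 1) - fp (t - s - 1) (α - 1))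
  else
    1 / Real.Gamma α * (fp t (α - 1) * fp (α + b - s) (α - 1) / fp (α + b + 1) (α - 1))

/-- A function `y : T_b → ℝ`, `T_b = {α-2+k : k = 0,…,b+3}`, is encoded as `y : ℕ → ℝ`
via `k ↦ y(α-2+k)`.  `fracSum α y k` is the discrete fractional sum
`(Δ^{-(2-α)} y)(t)` of order `2-α ∈ [0,1)` starting at `a = α-2`, evaluated at the
point `t = a + (2-α) + k = k`; when `α = 2` we use the convention `Δ^0 y = y`. -/
noncomputable def fracSum (α : ℝ) (y : ℕ → ℝ) (k : ℕ) : ℝ :=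
  if α = 2 then y k
  else 1 / Real.Gamma (2 - α) *
    ∑ j ∈ Finset.range (k + 1), fp ((k : ℝ) - (j : ℝ) + 1 - α) (1 - α) * y j

/-- The discrete fractional difference `(Δ^α y)(t) = Δ²(Δ^{-(2-α)} y)(t)` at `t ∈ ℕ`,
where `Δ` is the forward difference. -/
noncomputable def fracDiff (α : ℝ) (y : ℕ → ℝ) (t : ℕ) : ℝ :=
  fracSum α y (t + 2) - 2 * fracSum α y (t + 1) + fracSum α y t

open Finset

namespace GreenAux

noncomputable def D (a : ℝ) (i : ℕ) : ℝ := (∏ r ∈ Finset.range i, (a + r)) / (Nat.factorial i)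

lemma D_zero (a : ℝ) : D a 0 = 1 := by simp [D]

lemma D_succ (a : ℝ) (i : ℕ) : ((i : ℝ) + 1) * D a (i + 1) = (a + i) * D a i := by
  have h1 : (Nat.factorial i : ℝ) ≠ 0 := by exact_mod_cast (Nat.factorial_pos i).ne'
  unfold D
  rw [Finset.prod_range_succ, Nat.factorial_succ]
  push_cast
  field_simp

lemma D_pos {a : ℝ} (ha : 0 < a) (i : ℕ) : 0 < D a i := by
  apply div_pos
  · exact Finset.prod_pos fun r _ => by positivity
  · exact_mod_cast Nat.factorial_pos i

lemma D_two (N : ℕ) : D 2 N = N + 1 := by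
  induction N with
  | zero => simp [D]
  | succ N ih =>
    have h := D_succ 2 N
    rw [ih] at h
    have hN : ((N : ℝ) + 1) ≠ 0 := by positivity
    apply mul_left_cancel₀ hN
    rw [h]
    push_cast
    ring

lemma vandermonde (a c : ℝ) (N : ℕ) :
    ∑ j ∈ Finset.range (N + 1), D a (N - j) * D c j = D (a + c) N := by
  induction N with
  | zero => simp [D_zero]
  | succ N ih =>
    have hN : ((N : ℝ) + 1) ≠ 0 := by positivity
    apply mul_left_cancel₀ hN
    rw [D_succ (a + c) N, ← ih, Finset.mul_sum]
    have hstep : ∀ j ∈ Finset.range (N + 2),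
        ((N : ℝ) + 1) * (D a (N + 1 - j) * D c j)
        = ((((N + 1 - j : ℕ)) : ℝ) * D a (N + 1 - j) * D c j
            + D a (N + 1 - j) * ((j : ℝ) * D c j)) := by
      intro j hj
      have hj' : j ≤ N + 1 := Nat.lt_succ_iff.mp (Finset.mem_range.mp hj)
      rw [Nat.cast_sub hj']
      push_cast
      ring
    rw [Finset.sum_congr rfl hstep, Finset.sum_add_distrib]
    have hA : ∑ j ∈ Finset.range (N + 2), (((N + 1 - j : ℕ) : ℝ) * D a (N + 1 - j) * D c j)
        = ∑ j ∈ Finset.range (N + 1), (a + ((N - j : ℕ) : ℝ)) * (D a (N - j) * D c j) := by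
      rw [Finset.sum_range_succ]
      simp only [Nat.sub_self, Nat.cast_zero, zero_mul]
      rw [add_zero]
      refine Finset.sum_congr rfl fun j hj => ?_
      have hj' : j ≤ N := Nat.lt_succ_iff.mp (Finset.mem_range.mp hj)
      have h1 : N + 1 - j = (N - j) + 1 := by omega
      rw [h1, Nat.cast_add, Nat.cast_one, D_succ a (N - j), mul_assoc]
    have hB : ∑ j ∈ Finset.range (N + 2), D a (N + 1 - j) * ((j : ℝ) * D c j)
        = ∑ j ∈ Finset.range (N + 1), (c + (j : ℝ)) * (D a (N - j) * D c j) := by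
      rw [Finset.sum_range_succ']
      simp only [Nat.cast_zero, zero_mul, mul_zero, add_zero]
      refine Finset.sum_congr rfl fun j hj => ?_
      have h1 : N + 1 - (j + 1) = N - j := by omega
      rw [h1, Nat.cast_add, Nat.cast_one, D_succ c j]
      ring
    rw [hA, hB, ← Finset.sum_add_distrib, Finset.mul_sum]
    refine Finset.sum_congr rfl fun j hj => ?_
    have hj' : j ≤ N := Nat.lt_succ_iff.mp (Finset.mem_range.mp hj)
    rw [Nat.cast_sub hj']
    ring

lemma Gamma_add_nat {a : ℝ} (ha : 0 < a) (i : ℕ) :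
    Real.Gamma (a + i) = D a i * (Nat.factorial i) * Real.Gamma a := by
  induction i with
  | zero => simp [D_zero]
  | succ i ih =>
    have hpos : (0 : ℝ) < a + i := by positivity
    rw [show a + ((i + 1 : ℕ) : ℝ) = (a + i) + 1 by push_cast; ring,
      Real.Gamma_add_one hpos.ne', ih, Nat.factorial_succ]
    have h := D_succ a i
    push_cast
    linear_combination (-(Nat.factorial i : ℝ) * Real.Gamma a) * h

lemma vf_zero (α : ℝ) : fp (α - 2 + ((0 : ℕ) : ℝ)) (α - 1) = 0 := by
  unfold fp
  rw [show α - 2 + ((0 : ℕ) : ℝ) - (α - 1) + 1 = 0 by push_cast; ring, Real.Gamma_zero, div_zero]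

lemma vf_succ {α : ℝ} (hα : 0 < α) (i : ℕ) :
    fp (α - 2 + ((i + 1 : ℕ) : ℝ)) (α - 1) = D α i * Real.Gamma α := by
  unfold fp
  rw [show α - 2 + ((i + 1 : ℕ) : ℝ) + 1 = α + i by push_cast; ring,
    show α - 2 + ((i + 1 : ℕ) : ℝ) - (α - 1) + 1 = (i : ℝ) + 1 by push_cast; ring,
    Real.Gamma_nat_eq_factorial, Gamma_add_nat hα i]
  have h1 : (Nat.factorial i : ℝ) ≠ 0 := by exact_mod_cast (Nat.factorial_pos i).ne'
  field_simp

lemma gf_eq {α : ℝ} (hα : α < 2) (m : ℕ) :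
    fp ((m : ℝ) + 1 - α) (1 - α) = D (2 - α) m * Real.Gamma (2 - α) := by
  unfold fp
  rw [show (m : ℝ) + 1 - α + 1 = (2 - α) + m by ring,
    show (m : ℝ) + 1 - α - (1 - α) + 1 = (m : ℝ) + 1 by ring,
    Real.Gamma_nat_eq_factorial, Gamma_add_nat (by linarith) m]
  have h1 : (Nat.factorial m : ℝ) ≠ 0 := by exact_mod_cast (Nat.factorial_pos m).ne'
  field_simp

lemma Gamma_two' : Real.Gamma 2 = 1 := by
  rw [show (2 : ℝ) = ((1 : ℕ) : ℝ) + 1 by norm_num, Real.Gamma_nat_eq_factorial]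
  simp

lemma vf_two (m : ℕ) : fp ((2 : ℝ) - 2 + (m : ℝ)) ((2 : ℝ) - 1) = m := by
  cases m with
  | zero => simpa using vf_zero 2
  | succ i =>
    rw [vf_succ (α := 2) (by norm_num) i, D_two, Gamma_two']
    push_cast
    ring

lemma fracSum_v {α : ℝ} (hα1 : 1 < α) (hα2 : α ≤ 2) (m : ℕ) :
    fracSum α (fun k => fp (α - 2 + (k : ℝ)) (α - 1)) m = Real.Gamma α * m := by
  rcases eq_or_lt_of_le hα2 with h2 | h2
  · subst h2
    rw [fracSum, if_pos rfl, vf_two, Gamma_two', one_mul]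
  · have hα0 : (0 : ℝ) < α := by linarith
    have hg2 : Real.Gamma (2 - α) ≠ 0 := (Real.Gamma_pos_of_pos (by linarith)).ne'
    rw [fracSum, if_neg h2.ne]
    cases m with
    | zero =>
      rw [Finset.sum_range_one, vf_zero, mul_zero, mul_zero]
      simp
    | succ N =>
      rw [Finset.sum_range_succ', vf_zero, mul_zero, add_zero]
      have hterm : ∀ i ∈ Finset.range (N + 1),
          fp (((N + 1 : ℕ) : ℝ) - ((i + 1 : ℕ) : ℝ) + 1 - α) (1 - α) * fp (α - 2 + ((i + 1 : ℕ) : ℝ)) (α - 1)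
          = (Real.Gamma (2 - α) * Real.Gamma α) * (D (2 - α) (N - i) * D α i) := by
        intro i hi
        have hi' : i ≤ N := Nat.lt_succ_iff.mp (Finset.mem_range.mp hi)
        rw [vf_succ hα0 i,
          show ((N + 1 : ℕ) : ℝ) - ((i + 1 : ℕ) : ℝ) + 1 - α = ((N - i : ℕ) : ℝ) + 1 - α by
            rw [Nat.cast_sub hi']; push_cast; ring,
          gf_eq h2 (N - i)]
        ring
      rw [Finset.sum_congr rfl hterm, ← Finset.mul_sum, vandermonde,
        show (2 - α) + α = (2 : ℝ) by ring, D_two]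
      field_simp
      push_cast
      ring

lemma fracSum_W {α : ℝ} (hα1 : 1 < α) (hα2 : α ≤ 2) (s k : ℕ) :
    fracSum α (fun k => if s + 1 ≤ k then fp (α - 2 + ((k - 1 - s : ℕ) : ℝ)) (α - 1) else 0) k
      = Real.Gamma α * (if s + 1 ≤ k then (k : ℝ) - s - 1 else 0) := by
  rcases eq_or_lt_of_le hα2 with h2 | h2
  · subst h2
    rw [fracSum, if_pos rfl]
    by_cases hk : s + 1 ≤ k
    · rw [if_pos hk, if_pos hk, vf_two, Gamma_two', one_mul,
        Nat.cast_sub (by omega), Nat.cast_sub (by omega), Nat.cast_one]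
      ring
    · rw [if_neg hk, if_neg hk, mul_zero]
  · have hα0 : (0 : ℝ) < α := by linarith
    have hg2 : Real.Gamma (2 - α) ≠ 0 := (Real.Gamma_pos_of_pos (by linarith)).ne'
    rw [fracSum, if_neg h2.ne]
    by_cases hk : s + 1 ≤ k
    · rw [if_pos hk]
      rw [Finset.range_eq_Ico, ← Finset.sum_Ico_consecutive _ (Nat.zero_le (s + 1)) (by omega),
        ← Finset.range_eq_Ico]
      have hz : ∑ j ∈ Finset.range (s + 1),
          fp ((k : ℝ) - (j : ℝ) + 1 - α) (1 - α) *
            (if s + 1 ≤ j then fp (α - 2 + ((j - 1 - s : ℕ) : ℝ)) (α - 1) else 0) = 0 := by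
        refine Finset.sum_eq_zero fun j hj => ?_
        rw [if_neg (by have := Finset.mem_range.mp hj; omega), mul_zero]
      rw [hz, zero_add, Finset.sum_Ico_eq_sum_range]
      have hM : k + 1 - (s + 1) = (k - s - 1) + 1 := by omega
      rw [hM]
      have hterm : ∀ i ∈ Finset.range ((k - s - 1) + 1),
          fp ((k : ℝ) - ((s + 1 + i : ℕ) : ℝ) + 1 - α) (1 - α) *
            (if s + 1 ≤ s + 1 + i then fp (α - 2 + ((s + 1 + i - 1 - s : ℕ) : ℝ)) (α - 1) else 0)
          = fp (((k - s - 1 : ℕ) : ℝ) - (i : ℝ) + 1 - α) (1 - α) * fp (α - 2 + (i : ℝ)) (α - 1) := by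
        intro i hi
        rw [if_pos (by omega), show s + 1 + i - 1 - s = i by omega,
          show (k : ℝ) - ((s + 1 + i : ℕ) : ℝ) = ((k - s - 1 : ℕ) : ℝ) - (i : ℝ) by
            rw [Nat.cast_sub (by omega), Nat.cast_sub (by omega)]; push_cast; ring]
      rw [Finset.sum_congr rfl hterm]
      have := fracSum_v hα1 hα2 (k - s - 1)
      rw [fracSum, if_neg h2.ne] at this
      rw [this, Nat.cast_sub (by omega), Nat.cast_sub (by omega), Nat.cast_one]
    · rw [if_neg hk]
      have hz : ∑ j ∈ Finset.range (k + 1),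
          fp ((k : ℝ) - (j : ℝ) + 1 - α) (1 - α) *
            (if s + 1 ≤ j then fp (α - 2 + ((j - 1 - s : ℕ) : ℝ)) (α - 1) else 0) = 0 := by
        refine Finset.sum_eq_zero fun j hj => ?_
        rw [if_neg (by have := Finset.mem_range.mp hj; omega), mul_zero]
      rw [hz, mul_zero, mul_zero]

lemma fracSum_linear (α a d : ℝ) (u u' : ℕ → ℝ) (m : ℕ) :
    fracSum α (fun k => a * u k + d * u' k) m = a * fracSum α u m + d * fracSum α u' m := by
  unfold fracSum
  split_ifs with h
  · ring
  · rw [show (∑ j ∈ Finset.range (m + 1),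
        fp ((m : ℝ) - (j : ℝ) + 1 - α) (1 - α) * (a * u j + d * u' j))
      = a * (∑ j ∈ Finset.range (m + 1), fp ((m : ℝ) - (j : ℝ) + 1 - α) (1 - α) * u j)
        + d * (∑ j ∈ Finset.range (m + 1), fp ((m : ℝ) - (j : ℝ) + 1 - α) (1 - α) * u' j) by
        rw [Finset.mul_sum, Finset.mul_sum, ← Finset.sum_add_distrib]
        exact Finset.sum_congr rfl fun j _ => by ring]
    ring

lemma fracSum_sum (α : ℝ) {ι : Type*} (F : Finset ι) (Y : ι → ℕ → ℝ) (m : ℕ) :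
    fracSum α (fun k => ∑ s ∈ F, Y s k) m = ∑ s ∈ F, fracSum α (Y s) m := by
  unfold fracSum
  split_ifs with h
  · rfl
  · rw [← Finset.mul_sum]
    congr 1
    rw [show (∑ j ∈ Finset.range (m + 1), fp ((m : ℝ) - (j : ℝ) + 1 - α) (1 - α) * ∑ s ∈ F, Y s j)
      = ∑ j ∈ Finset.range (m + 1), ∑ s ∈ F, fp ((m : ℝ) - (j : ℝ) + 1 - α) (1 - α) * Y s j from
      Finset.sum_congr rfl fun j _ => Finset.mul_sum _ _ _]
    exact Finset.sum_comm

lemma fracSum_top {α : ℝ} (hα1 : 1 < α) (hα2 : α ≤ 2) {u u' : ℕ → ℝ} {k : ℕ}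
    (h : ∀ j, j < k → u j = u' j) :
    fracSum α u k - fracSum α u' k = u k - u' k := by
  rcases eq_or_lt_of_le hα2 with h2 | h2
  · subst h2
    rw [fracSum, fracSum, if_pos rfl, if_pos rfl]
  · have hg2 : Real.Gamma (2 - α) ≠ 0 := (Real.Gamma_pos_of_pos (by linarith)).ne'
    rw [fracSum, fracSum, if_neg h2.ne, if_neg h2.ne, ← mul_sub, ← Finset.sum_sub_distrib]
    have hterm : ∀ j ∈ Finset.range (k + 1),
        fp ((k : ℝ) - (j : ℝ) + 1 - α) (1 - α) * u j - fp ((k : ℝ) - (j : ℝ) + 1 - α) (1 - α) * u' j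
        = if j = k then Real.Gamma (2 - α) * (u k - u' k) else 0 := by
      intro j hj
      rcases eq_or_ne j k with rfl | hne
      · rw [if_pos rfl,
          show (j : ℝ) - (j : ℝ) + 1 - α = ((0 : ℕ) : ℝ) + 1 - α by push_cast; ring,
          gf_eq h2 0, D_zero]
        ring
      · rw [if_neg hne, h j (lt_of_le_of_ne (Nat.lt_succ_iff.mp (Finset.mem_range.mp hj)) hne)]
        ring
    rw [Finset.sum_congr rfl hterm, Finset.sum_ite_eq' _ k,
      if_pos (Finset.self_mem_range_succ k)]
    field_simp

lemma fracSum_smul (α c : ℝ) (u : ℕ → ℝ) (m : ℕ) :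
    fracSum α (fun k => c * u k) m = c * fracSum α u m := by
  have : (fun k => c * u k) = (fun k => c * u k + 0 * u k) := funext fun k => by ring
  rw [this, fracSum_linear]
  ring

lemma fracSum_sub (α : ℝ) (u u' : ℕ → ℝ) (m : ℕ) :
    fracSum α (fun k => u k - u' k) m = fracSum α u m - fracSum α u' m := by
  have : (fun k => u k - u' k) = (fun k => 1 * u k + (-1) * u' k) := funext fun k => by ring
  rw [this, fracSum_linear]
  ring

lemma solve_step {α : ℝ} (hα1 : 1 < α) (hα2 : α ≤ 2) {u u' : ℕ → ℝ} {t : ℕ}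
    (hagree : ∀ j, j < t + 2 → u j = u' j) (hd : fracDiff α u t = fracDiff α u' t) :
    u (t + 2) = u' (t + 2) := by
  have e2 := fracSum_top hα1 hα2 (u := u) (u' := u') (k := t + 2) hagree
  have e1 := fracSum_top hα1 hα2 (u := u) (u' := u') (k := t + 1)
    (fun j hj => hagree j (by omega))
  have e0 := fracSum_top hα1 hα2 (u := u) (u' := u') (k := t)
    (fun j hj => hagree j (by omega))
  have h1 : u (t + 1) = u' (t + 1) := hagree _ (by omega)
  have h0' : u t = u' t := hagree _ (by omega)
  unfold fracDiff at hd
  linarith [e2, e1, e0, hd]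

lemma G_decomp (α : ℝ) (b k s : ℕ) :
    G α b (α - 2 + (k : ℝ)) s
      = (fp (α + b - s) (α - 1) / fp (α + b + 1) (α - 1) * fp (α - 2 + (k : ℝ)) (α - 1)
          - (if s + 1 ≤ k then fp (α - 2 + ((k - 1 - s : ℕ) : ℝ)) (α - 1) else 0))
        / Real.Gamma α := by
  unfold G
  have hcond : ((s : ℝ) ≤ α - 2 + (k : ℝ) - α + 1) ↔ s + 1 ≤ k := by
    rw [show α - 2 + (k : ℝ) - α + 1 = (k : ℝ) - 1 by ring, le_sub_iff_add_le]
    exact_mod_cast Iff.rfl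
  by_cases hk : s + 1 ≤ k
  · rw [if_pos (hcond.mpr hk), if_pos hk,
      show α - 2 + (k : ℝ) - (s : ℝ) - 1 = α - 2 + ((k - 1 - s : ℕ) : ℝ) by
        rw [Nat.cast_sub (by omega), Nat.cast_sub (by omega)]; push_cast; ring]
    ring
  · rw [if_neg (fun hc => hk (hcond.mp hc)), if_neg hk]
    ring

lemma unique_zero {α : ℝ} (hα1 : 1 < α) (hα2 : α ≤ 2) (b : ℕ) (w : ℕ → ℝ)
    (hw : ∀ t, t ≤ b + 1 → fracDiff α w t = 0)
    (h0 : w 0 = 0) (h1 : w (b + 3) = 0) :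
    ∀ k, k ≤ b + 3 → w k = 0 := by
  have hα0 : (0 : ℝ) < α := by linarith
  have hΓ : Real.Gamma α ≠ 0 := (Real.Gamma_pos_of_pos hα0).ne'
  have hfdv : ∀ t : ℕ, fracDiff α (fun k => fp (α - 2 + (k : ℝ)) (α - 1)) t = 0 := by
    intro t
    unfold fracDiff
    rw [fracSum_v hα1 hα2, fracSum_v hα1 hα2, fracSum_v hα1 hα2]
    push_cast
    ring
  have hv1 : fp (α - 2 + ((1 : ℕ) : ℝ)) (α - 1) = Real.Gamma α := by
    have := vf_succ hα0 0
    rw [D_zero, one_mul] at this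
    exact this
  have claim : ∀ k, k ≤ b + 3 →
      w k = (w 1 / Real.Gamma α) * fp (α - 2 + (k : ℝ)) (α - 1) := by
    intro k
    induction k using Nat.strong_induction_on with
    | _ k ih =>
      intro hk
      match k with
      | 0 => rw [h0, vf_zero, mul_zero]
      | 1 =>
        rw [hv1]
        field_simp
      | (t + 2) =>
        refine solve_step hα1 hα2 (fun j hj => ih j hj (by omega)) ?_
        rw [hw t (by omega)]
        have : fracDiff α (fun j => (w 1 / Real.Gamma α) * fp (α - 2 + (j : ℝ)) (α - 1)) t
            = (w 1 / Real.Gamma α) * fracDiff α (fun j => fp (α - 2 + (j : ℝ)) (α - 1)) t := by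
          unfold fracDiff
          rw [fracSum_smul, fracSum_smul, fracSum_smul]
          ring
        rw [this, hfdv, mul_zero]
  have hvb : fp (α - 2 + ((b + 3 : ℕ) : ℝ)) (α - 1) = D α (b + 2) * Real.Gamma α := by
    rw [show b + 3 = (b + 2) + 1 by omega]
    exact vf_succ hα0 (b + 2)
  have hw1 : w 1 = 0 := by
    have := claim (b + 3) le_rfl
    rw [h1, hvb] at this
    have hD : D α (b + 2) ≠ 0 := (D_pos hα0 (b + 2)).ne'
    field_simp at this
    exact (mul_eq_zero.mp this.symm).resolve_right hD
  intro k hk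
  rw [claim k hk, hw1, zero_div, zero_mul]

lemma delta (s t : ℕ) :
    (if s + 1 ≤ t + 2 then ((t + 2 : ℕ) : ℝ) - s - 1 else 0)
      - 2 * (if s + 1 ≤ t + 1 then ((t + 1 : ℕ) : ℝ) - s - 1 else 0)
      + (if s + 1 ≤ t then ((t : ℕ) : ℝ) - s - 1 else 0)
    = if s = t then 1 else 0 := by
  rcases Nat.lt_trichotomy s t with h | rfl | h
  · rw [if_pos (by omega), if_pos (by omega), if_pos (by omega), if_neg (by omega)]
    push_cast
    ring
  · rw [if_pos (by omega), if_pos (by omega), if_neg (by omega), if_pos rfl]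
    push_cast
    ring
  · rcases eq_or_ne s (t + 1) with rfl | hne
    · rw [if_pos (by omega), if_neg (by omega), if_neg (by omega), if_neg (by omega)]
      push_cast
      ring
    · rw [if_neg (by omega), if_neg (by omega), if_neg (by omega), if_neg (by omega)]
      ring

lemma z_zero (α : ℝ) (b : ℕ) (h : ℕ → ℝ) :
    ∑ s ∈ Finset.range (b + 2), G α b (α - 2 + ((0 : ℕ) : ℝ)) s * h s = 0 := by
  refine Finset.sum_eq_zero fun s hs => ?_
  rw [G_decomp, vf_zero, if_neg (by omega), mul_zero, sub_zero, zero_div, zero_mul]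

lemma z_last {α : ℝ} (hα1 : 1 < α) (b : ℕ) (h : ℕ → ℝ) :
    ∑ s ∈ Finset.range (b + 2), G α b (α - 2 + ((b + 3 : ℕ) : ℝ)) s * h s = 0 := by
  have hα0 : (0 : ℝ) < α := by linarith
  have hΓ : (0 : ℝ) < Real.Gamma α := Real.Gamma_pos_of_pos hα0
  have hne : fp (α - 2 + ((b + 3 : ℕ) : ℝ)) (α - 1) ≠ 0 := by
    rw [show b + 3 = (b + 2) + 1 by omega, vf_succ hα0 (b + 2)]
    exact (mul_pos (D_pos hα0 (b + 2)) hΓ).ne'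
  refine Finset.sum_eq_zero fun s hs => ?_
  have hs' : s < b + 2 := Finset.mem_range.mp hs
  rw [G_decomp, if_pos (by omega), show (b + 3) - 1 - s = b + 2 - s by omega,
    show α + (b : ℝ) - s = α - 2 + ((b + 2 - s : ℕ) : ℝ) by
      rw [Nat.cast_sub (by omega)]; push_cast; ring,
    show α + (b : ℝ) + 1 = α - 2 + ((b + 3 : ℕ) : ℝ) by push_cast; ring,
    div_mul_cancel₀ _ hne, sub_self, zero_div, zero_mul]

lemma fracDiff_z {α : ℝ} (hα1 : 1 < α) (hα2 : α ≤ 2) (b : ℕ) (h : ℕ → ℝ) :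
    ∀ t, t ≤ b + 1 →
      fracDiff α (fun k => ∑ s ∈ Finset.range (b + 2), G α b (α - 2 + (k : ℝ)) s * h s) t
        = -(h t) := by
  intro t ht
  have hΓ : Real.Gamma α ≠ 0 := (Real.Gamma_pos_of_pos (by linarith)).ne'
  set c : ℕ → ℝ := fun s => fp (α + b - s) (α - 1) / fp (α + b + 1) (α - 1) with hc
  have hzfun : (fun k : ℕ => ∑ s ∈ Finset.range (b + 2), G α b (α - 2 + (k : ℝ)) s * h s)
      = fun k : ℕ => ∑ s ∈ Finset.range (b + 2),
          ((h s * c s / Real.Gamma α) * fp (α - 2 + (k : ℝ)) (α - 1)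
            + (-(h s) / Real.Gamma α) *
              (if s + 1 ≤ k then fp (α - 2 + ((k - 1 - s : ℕ) : ℝ)) (α - 1) else 0)) := by
    funext k
    refine Finset.sum_congr rfl fun s hs => ?_
    rw [G_decomp, hc]
    ring
  have hFS : ∀ m : ℕ,
      fracSum α (fun k => ∑ s ∈ Finset.range (b + 2), G α b (α - 2 + (k : ℝ)) s * h s) m
        = ∑ s ∈ Finset.range (b + 2),
            ((h s * c s / Real.Gamma α) * (Real.Gamma α * m)
              + (-(h s) / Real.Gamma α) *
                (Real.Gamma α * (if s + 1 ≤ m then (m : ℝ) - s - 1 else 0))) := by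
    intro m
    rw [hzfun, fracSum_sum]
    refine Finset.sum_congr rfl fun s hs => ?_
    rw [fracSum_linear, fracSum_v hα1 hα2, fracSum_W hα1 hα2]
  unfold fracDiff
  rw [hFS, hFS, hFS, Finset.mul_sum, ← Finset.sum_sub_distrib, ← Finset.sum_add_distrib,
    show -(h t) = ∑ s ∈ Finset.range (b + 2), (if s = t then -(h s) else 0) by
      rw [Finset.sum_ite_eq' _ t, if_pos (Finset.mem_range.mpr (by omega))]]
  refine Finset.sum_congr rfl fun s hs => ?_
  have e1 : ∀ x : ℝ, h s * c s / Real.Gamma α * (Real.Gamma α * x) = h s * c s * x := by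
    intro x; field_simp
  have e2 : ∀ x : ℝ, -(h s) / Real.Gamma α * (Real.Gamma α * x) = -(h s) * x := by
    intro x; field_simp
  simp only [e1, e2]
  have hδ := delta s t
  have hcst : ((t + 2 : ℕ) : ℝ) - 2 * ((t + 1 : ℕ) : ℝ) + (t : ℝ) = 0 := by push_cast; ring
  rw [show (if s = t then -(h s) else 0) = -(h s) * (if s = t then (1 : ℝ) else 0) by
    split_ifs <;> ring]
  linear_combination (-(h s)) * hδ + (h s * c s) * hcst

end GreenAux

/-- If `y` solves the discrete fractional BVP
`Δ^α y(t) + q(t+α-1)·f(y(t+α-1)) = 0`, `t = 0,…,b+1`, with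
`y(α-2) = y(α+b+1) = 0`, then `y` satisfies the Green-function sum representation.
Here `y k` stands for `y(α-2+k)` and `q s` stands for `q(α-1+s)`. -/
theorem statement0 (α : ℝ) (b : ℕ) (hα1 : 1 < α) (hα2 : α ≤ 2) (hb : 2 ≤ b)
    (q : ℕ → ℝ) (f : ℝ → ℝ) (y : ℕ → ℝ)
    (hbvp : ∀ t : ℕ, t ≤ b + 1 → fracDiff α y t + q t * f (y (t + 1)) = 0)
    (hbc0 : y 0 = 0) (hbc1 : y (b + 3) = 0) :
    ∀ k : ℕ, k ≤ b + 3 →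
      y k = ∑ s ∈ Finset.range (b + 2), G α b (α - 2 + k) s * q s * f (y (s + 1)) := by
  intro k hk
  set hh : ℕ → ℝ := fun s => q s * f (y (s + 1)) with hhh
  have hyz : ∀ m, m ≤ b + 3 →
      y m - (∑ s ∈ Finset.range (b + 2), G α b (α - 2 + (m : ℝ)) s * hh s) = 0 := by
    apply GreenAux.unique_zero hα1 hα2 b
      (fun m => y m - ∑ s ∈ Finset.range (b + 2), G α b (α - 2 + (m : ℝ)) s * hh s)
    · intro t ht
      have hd : fracDiff α
          (fun m => y m - ∑ s ∈ Finset.range (b + 2), G α b (α - 2 + (m : ℝ)) s * hh s) t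
          = fracDiff α y t
            - fracDiff α (fun m => ∑ s ∈ Finset.range (b + 2), G α b (α - 2 + (m : ℝ)) s * hh s) t := by
        unfold fracDiff
        rw [GreenAux.fracSum_sub, GreenAux.fracSum_sub, GreenAux.fracSum_sub]
        ring
      rw [hd, GreenAux.fracDiff_z hα1 hα2 b hh t ht]
      have hb' := hbvp t ht
      have : hh t = q t * f (y (t + 1)) := rfl
      rw [this]
      linarith
    · show y 0 - (∑ s ∈ Finset.range (b + 2), G α b (α - 2 + ((0 : ℕ) : ℝ)) s * hh s) = 0
      rw [hbc0, GreenAux.z_zero α b hh]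
      ring
    · show y (b + 3) - (∑ s ∈ Finset.range (b + 2), G α b (α - 2 + ((b + 3 : ℕ) : ℝ)) s * hh s) = 0
      rw [hbc1, GreenAux.z_last hα1 b hh]
      ring
  have h1 := hyz k hk
  have h2 : y k = ∑ s ∈ Finset.range (b + 2), G α b (α - 2 + (k : ℝ)) s * hh s := by linarith
  rw [h2]
  exact Finset.sum_congr rfl fun s hs => by rw [hhh]; ring
end

section
/- Suppose q is a real-valued function on {α−1+s : s = 0,1,…,b+1} and f : ℝ → ℝ. If y : T_b → ℝ satisfies y(t) = Σ_{s=0}^{b+1} G(t,s)·q(s+α−1)·f(y(s+α−1)) for every t ∈ T_b, then y satisfies the discrete fractional boundary value problem Δ^{α}y(t) + q(t+α−1)·f(y(t+α−1)) = 0 for t = 0,1,…,b+1 together with y(α−2) = 0 and y(α+b+1) = 0. -/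
open Finset in
/-- Ascending Pochhammer product. -/
noncomputable def P (n : ℕ) (x : ℝ) : ℝ := ∏ i ∈ Finset.range n, (x + i)

lemma P_zero (x : ℝ) : P 0 x = 1 := by simp [P]

lemma P_succ (n : ℕ) (x : ℝ) : P (n+1) x = P n x * (x + n) := Finset.prod_range_succ _ _

lemma vander (x y : ℝ) (n : ℕ) :
    ∑ ij ∈ Finset.HasAntidiagonal.antidiagonal n, (n.choose ij.1 : ℝ) * (P ij.1 x * P ij.2 y)
      = P n (x + y) := by
  induction n with
  | zero => simp [P]
  | succ n ih =>
    rw [Finset.sum_antidiagonal_choose_succ_mul (fun i j => P i x * P j y) n]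
    have h1 : ∑ ij ∈ Finset.HasAntidiagonal.antidiagonal n, (n.choose ij.1 : ℝ) * (P ij.1 x * P (ij.2+1) y)
        = ∑ ij ∈ Finset.HasAntidiagonal.antidiagonal n,
            ((n.choose ij.1 : ℝ) * (P ij.1 x * P ij.2 y)) * (y + ij.2) := by
      refine Finset.sum_congr rfl fun ij _ => ?_
      rw [P_succ]; ring
    have h2 : ∑ ij ∈ Finset.HasAntidiagonal.antidiagonal n, (n.choose ij.2 : ℝ) * (P (ij.1+1) x * P ij.2 y)
        = ∑ ij ∈ Finset.HasAntidiagonal.antidiagonal n,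
            ((n.choose ij.1 : ℝ) * (P ij.1 x * P ij.2 y)) * (x + ij.1) := by
      refine Finset.sum_congr rfl fun ij hij => ?_
      have h := Finset.HasAntidiagonal.mem_antidiagonal.mp hij
      rw [Nat.choose_symm_of_eq_add h.symm, P_succ]; ring
    rw [h1, h2, ← Finset.sum_add_distrib]
    have h3 : ∀ ij ∈ Finset.HasAntidiagonal.antidiagonal n,
        ((n.choose ij.1 : ℝ) * (P ij.1 x * P ij.2 y)) * (y + ij.2)
          + ((n.choose ij.1 : ℝ) * (P ij.1 x * P ij.2 y)) * (x + ij.1)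
        = ((n.choose ij.1 : ℝ) * (P ij.1 x * P ij.2 y)) * ((x + y) + n) := by
      intro ij hij
      have h := Finset.HasAntidiagonal.mem_antidiagonal.mp hij
      have : (ij.1 : ℝ) + ij.2 = n := by exact_mod_cast congrArg Nat.cast h
      rw [← this]; ring
    rw [Finset.sum_congr rfl h3, ← Finset.sum_mul, ih, P_succ]

lemma P_two (n : ℕ) : P n 2 = Nat.factorial (n+1) := by
  induction n with
  | zero => simp [P]
  | succ n ih =>
    rw [P_succ, ih]
    push_cast [Nat.factorial_succ]
    ring

lemma Gamma_P {x : ℝ} (hx : 0 < x) (n : ℕ) :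
    Real.Gamma (x + n) = P n x * Real.Gamma x := by
  induction n with
  | zero => simp [P]
  | succ n ih =>
    have hne : x + n ≠ 0 := by positivity
    have : x + ((n:ℝ)+1) = (x + n) + 1 := by ring
    rw [Nat.cast_add, Nat.cast_one, this, Real.Gamma_add_one hne, ih, P_succ]
    ring

lemma fp_eq_zero {x y : ℝ} (m : ℕ) (h : x - y + 1 = -(m:ℝ)) : fp x y = 0 := by
  rw [fp, h, Real.Gamma_neg_nat_eq_zero, div_zero]

/-- The core combinatorial identity. -/
lemma core {α : ℝ} (hα1 : 1 < α) (hα2 : α < 2) (m : ℕ) :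
    ∑ j ∈ Finset.range (m+1+1), fp (((m+1 : ℕ) : ℝ) - (j:ℝ) + 1 - α) (1-α) * fp (α-2+(j:ℝ)) (α-1)
      = Real.Gamma (2-α) * Real.Gamma α * (m+1) := by
  have h2α : (0:ℝ) < 2 - α := by linarith
  have hαpos : (0:ℝ) < α := by linarith
  rw [Finset.sum_range_succ']
  have h0 : fp (α-2+((0:ℕ):ℝ)) (α-1) = 0 := by
    apply fp_eq_zero 0
    push_cast; ring
  rw [h0, mul_zero, add_zero]
  have hterm : ∀ i ∈ Finset.range (m+1),
      fp (((m+1 : ℕ) : ℝ) - ((i+1 : ℕ):ℝ) + 1 - α) (1-α) * fp (α-2+((i+1 : ℕ):ℝ)) (α-1)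
        = (Real.Gamma (2-α) * Real.Gamma α) *
            ((Nat.choose m i : ℝ) * (P i α * P (m-i) (2-α)) / (Nat.factorial m)) := by
    intro i hi
    have him : i ≤ m := Nat.lt_succ_iff.mp (Finset.mem_range.mp hi)
    have hcast : ((m - i : ℕ) : ℝ) = (m:ℝ) - i := by
      push_cast [Nat.cast_sub him]; ring
    have e1 : fp (((m+1 : ℕ) : ℝ) - ((i+1 : ℕ):ℝ) + 1 - α) (1-α)
        = Real.Gamma ((2-α) + (m-i : ℕ)) / Real.Gamma (((m-i : ℕ):ℝ) + 1) := by
      rw [fp]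
      congr 1
      · congr 1; rw [hcast]; push_cast; ring
      · rw [hcast]; push_cast; ring
    have e2 : fp (α-2+((i+1 : ℕ):ℝ)) (α-1)
        = Real.Gamma (α + (i : ℕ)) / Real.Gamma (((i : ℕ):ℝ) + 1) := by
      rw [fp]
      congr 1
      · congr 1; push_cast; ring
      · congr 1; push_cast; ring
    rw [e1, e2, Gamma_P h2α, Gamma_P hαpos, Real.Gamma_nat_eq_factorial,
      Real.Gamma_nat_eq_factorial]
    have hfac : (Nat.choose m i : ℝ) * (Nat.factorial i) * (Nat.factorial (m-i)) = (Nat.factorial m) := by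
      exact_mod_cast congrArg (Nat.cast (R := ℝ)) (Nat.choose_mul_factorial_mul_factorial him)
    have hmf : ((Nat.factorial m) : ℝ) ≠ 0 := by positivity
    have hif : ((Nat.factorial i) : ℝ) ≠ 0 := by positivity
    have hmif : ((Nat.factorial (m-i)) : ℝ) ≠ 0 := by positivity
    field_simp
    rw [← hfac]; ring
  rw [Finset.sum_congr rfl hterm, ← Finset.mul_sum]
  have hv := vander α (2-α) m
  rw [Finset.Nat.sum_antidiagonal_eq_sum_range_succ_mk] at hv
  have h2 : α + (2-α) = 2 := by ring
  rw [h2, P_two] at hv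
  rw [← Finset.sum_div, hv]
  have hmf : ((Nat.factorial m) : ℝ) ≠ 0 := by positivity
  rw [Nat.factorial_succ]
  push_cast
  field_simp

lemma fp_nat_one (n : ℕ) : fp ((n:ℝ)) 1 = n := by
  rw [fp, show (n:ℝ) - 1 + 1 = (n:ℝ) by ring]
  cases n with
  | zero => norm_num [Real.Gamma_zero]
  | succ n =>
    rw [show ((n+1:ℕ):ℝ) = (n:ℝ)+1 by push_cast; ring, Real.Gamma_nat_eq_factorial,
      show (n:ℝ)+1+1 = ((n+1:ℕ):ℝ)+1 by push_cast; ring, Real.Gamma_nat_eq_factorial,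
      Nat.factorial_succ]
    have : ((Nat.factorial n):ℝ) ≠ 0 := by positivity
    push_cast; field_simp

/-- L1 : fractional sum of the basic falling power. -/
lemma fracSum_g0 {α : ℝ} (hα1 : 1 < α) (hα2 : α ≤ 2) (k : ℕ) :
    fracSum α (fun j => fp (α - 2 + (j:ℝ)) (α-1)) k = Real.Gamma α * k := by
  rcases eq_or_lt_of_le hα2 with h2 | h2
  · rw [fracSum, if_pos h2, h2]
    have e : (2:ℝ) - 2 + (k:ℝ) = (k:ℝ) := by ring
    rw [show (2:ℝ)-1 = 1 by norm_num, e, fp_nat_one, Real.Gamma_two, one_mul]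
  · have hne : α ≠ 2 := ne_of_lt h2
    rw [fracSum, if_neg hne]
    cases k with
    | zero =>
      rw [Finset.sum_range_one]
      have h0 : fp (α-2+((0:ℕ):ℝ)) (α-1) = 0 := by
        apply fp_eq_zero 0; push_cast; ring
      rw [h0]
      norm_num
    | succ m =>
      rw [core hα1 h2 m]
      have hΓ : Real.Gamma (2-α) ≠ 0 := ne_of_gt (Real.Gamma_pos_of_pos (by linarith))
      push_cast
      field_simp

/-- L2 : fractional sum of the shifted falling power. -/
lemma fracSum_gs {α : ℝ} (hα1 : 1 < α) (hα2 : α ≤ 2) (s k : ℕ) :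
    fracSum α (fun j => fp (α - 2 + (j:ℝ) - (s:ℝ) - 1) (α-1)) k
      = if s + 1 ≤ k then Real.Gamma α * ((k:ℝ) - (s:ℝ) - 1) else 0 := by
  have hzero : ∀ j : ℕ, j ≤ s → fp (α - 2 + (j:ℝ) - (s:ℝ) - 1) (α-1) = 0 := by
    intro j hj
    apply fp_eq_zero (s + 1 - j)
    rw [Nat.cast_sub (by omega)]
    push_cast; ring
  by_cases hks : s + 1 ≤ k
  · rw [if_pos hks]
    obtain ⟨m, rfl⟩ : ∃ m, k = s + 1 + m := ⟨k - (s+1), by omega⟩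
    have hcast : ((s + 1 + m : ℕ):ℝ) - (s:ℝ) - 1 = (m:ℝ) := by push_cast; ring
    have key : fracSum α (fun j => fp (α - 2 + (j:ℝ) - (s:ℝ) - 1) (α-1)) (s+1+m)
        = fracSum α (fun j => fp (α - 2 + (j:ℝ)) (α-1)) m := by
      rcases eq_or_lt_of_le hα2 with h2 | h2
      · rw [fracSum, fracSum, if_pos h2, if_pos h2]
        congr 1
        push_cast; ring
      · have hne : α ≠ 2 := ne_of_lt h2
        rw [fracSum, fracSum, if_neg hne, if_neg hne]
        congr 1
        rw [show s + 1 + m + 1 = (s+1) + (m+1) by ring, Finset.range_eq_Ico,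
          ← Finset.sum_Ico_consecutive _ (by omega : 0 ≤ s+1) (by omega : s+1 ≤ (s+1)+(m+1))]
        have hfirst : ∑ j ∈ Finset.Ico 0 (s+1),
            fp (((s+1+m : ℕ):ℝ) - (j:ℝ) + 1 - α) (1-α) * fp (α - 2 + (j:ℝ) - (s:ℝ) - 1) (α-1) = 0 := by
          apply Finset.sum_eq_zero
          intro j hj
          have hj' : j ≤ s := by have := (Finset.mem_Ico.mp hj).2; omega
          rw [hzero j hj']
          ring
        rw [hfirst, zero_add, Finset.sum_Ico_eq_sum_range]
        have hcard : s + 1 + (m + 1) - (s + 1) = m + 1 := by omega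
        rw [hcard]
        refine Finset.sum_congr rfl fun i _ => ?_
        congr 1
        · congr 1; push_cast; ring
        · congr 1; push_cast; ring
    rw [key, fracSum_g0 hα1 hα2, hcast]
  · rw [if_neg hks]
    rcases eq_or_lt_of_le hα2 with h2 | h2
    · rw [fracSum, if_pos h2, hzero k (by omega)]
    · rw [fracSum, if_neg (ne_of_lt h2)]
      rw [Finset.sum_eq_zero, mul_zero]
      intro j hj
      rw [hzero j (by have := Finset.mem_range.mp hj; omega)]
      ring

lemma fracSum_congr (α : ℝ) (u v : ℕ → ℝ) (k : ℕ) (h : ∀ j ≤ k, u j = v j) :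
    fracSum α u k = fracSum α v k := by
  rw [fracSum, fracSum]
  split_ifs
  · exact h k le_rfl
  · congr 1
    refine Finset.sum_congr rfl fun j hj => ?_
    rw [h j (by have := Finset.mem_range.mp hj; omega)]

lemma fracSum_sub (α : ℝ) (u v : ℕ → ℝ) (k : ℕ) :
    fracSum α (fun j => u j - v j) k = fracSum α u k - fracSum α v k := by
  rw [fracSum, fracSum, fracSum]
  split_ifs
  · rfl
  · rw [← mul_sub, ← Finset.sum_sub_distrib]
    congr 1
    refine Finset.sum_congr rfl fun j _ => ?_
    ring

lemma fracSum_const_mul (α : ℝ) (c : ℝ) (u : ℕ → ℝ) (k : ℕ) :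
    fracSum α (fun j => c * u j) k = c * fracSum α u k := by
  rw [fracSum, fracSum]
  split_ifs
  · rfl
  · simp only [Finset.mul_sum]
    exact Finset.sum_congr rfl fun j _ => by ring

lemma fracSum_sum (α : ℝ) {ι : Type*} (F : Finset ι) (g : ι → ℕ → ℝ) (k : ℕ) :
    fracSum α (fun j => ∑ s ∈ F, g s j) k = ∑ s ∈ F, fracSum α (g s) k := by
  rw [fracSum]
  split_ifs with h
  · refine Finset.sum_congr rfl fun s _ => ?_
    rw [fracSum, if_pos h]
  · simp_rw [Finset.mul_sum]
    rw [Finset.sum_comm]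
    refine Finset.sum_congr rfl fun s _ => ?_
    rw [fracSum, if_neg h, Finset.mul_sum]

lemma G_decomp {α : ℝ} (hα1 : 1 < α) (b : ℕ) (k s : ℕ) :
    G α b (α - 2 + (k:ℝ)) s
      = (1 / Real.Gamma α * (fp (α + (b:ℝ) - (s:ℝ)) (α-1) / fp (α + (b:ℝ) + 1) (α-1)))
          * fp (α - 2 + (k:ℝ)) (α-1)
        - (1 / Real.Gamma α) * fp (α - 2 + (k:ℝ) - (s:ℝ) - 1) (α-1) := by
  rw [G]
  split_ifs with h
  · rw [show α - 2 + (k:ℝ) - (s:ℝ) - 1 = (α - 2 + (k:ℝ)) - (s:ℝ) - 1 by ring]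
    ring
  · have hks : k ≤ s := by
      by_contra hc
      push_neg at hc
      apply h
      have h1 : (s:ℝ) + 1 ≤ (k:ℝ) := by exact_mod_cast hc
      linarith
    have hz : fp (α - 2 + (k:ℝ) - (s:ℝ) - 1) (α-1) = 0 := by
      apply fp_eq_zero (s + 1 - k)
      rw [Nat.cast_sub (by omega)]
      push_cast; ring
    rw [hz]
    ring

lemma fracDiff_col {α : ℝ} (hα1 : 1 < α) (hα2 : α ≤ 2) (c : ℝ) (s t : ℕ) :
    fracDiff α (fun j => c * fp (α - 2 + (j:ℝ)) (α-1)
        - (1 / Real.Gamma α) * fp (α - 2 + (j:ℝ) - (s:ℝ) - 1) (α-1)) t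
      = -(if t = s then 1 else 0) := by
  have hΓ : Real.Gamma α ≠ 0 := ne_of_gt (Real.Gamma_pos_of_pos (by linarith))
  have hcol : ∀ k : ℕ, fracSum α (fun j => c * fp (α - 2 + (j:ℝ)) (α-1)
      - (1 / Real.Gamma α) * fp (α - 2 + (j:ℝ) - (s:ℝ) - 1) (α-1)) k
      = c * (Real.Gamma α * (k:ℝ))
        - (1 / Real.Gamma α) * (if s + 1 ≤ k then Real.Gamma α * ((k:ℝ) - (s:ℝ) - 1) else 0) := by
    intro k
    rw [fracSum_sub α (fun j => c * fp (α - 2 + (j:ℝ)) (α-1))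
        (fun j => (1 / Real.Gamma α) * fp (α - 2 + (j:ℝ) - (s:ℝ) - 1) (α-1)) k,
      fracSum_const_mul, fracSum_const_mul, fracSum_g0 hα1 hα2, fracSum_gs hα1 hα2]
  rw [fracDiff, hcol, hcol, hcol]
  rcases Nat.lt_or_ge t s with hts | hts
  · rw [if_neg (by omega : ¬ t = s)]
    by_cases h2 : s + 1 ≤ t + 2
    · have hs : s = t + 1 := by omega
      subst hs
      rw [if_pos h2, if_neg (by omega), if_neg (by omega)]
      push_cast
      field_simp
      ring
    · rw [if_neg h2, if_neg (by omega), if_neg (by omega)]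
      push_cast
      ring
  · rcases eq_or_lt_of_le hts with hts' | hts'
    · have hs : s = t := hts'
      subst hs
      rw [if_pos rfl, if_pos (by omega), if_pos (by omega), if_neg (by omega)]
      push_cast
      field_simp
      ring
    · rw [if_neg (by omega : ¬ t = s), if_pos (by omega), if_pos (by omega), if_pos (by omega)]
      push_cast
      field_simp
      ring

lemma fracDiff_sum (α : ℝ) {ι : Type*} (F : Finset ι) (g : ι → ℕ → ℝ) (t : ℕ) :
    fracDiff α (fun j => ∑ s ∈ F, g s j) t = ∑ s ∈ F, fracDiff α (g s) t := by
  simp only [fracDiff]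
  rw [fracSum_sum, fracSum_sum, fracSum_sum, Finset.sum_add_distrib, Finset.sum_sub_distrib,
    ← Finset.mul_sum]

lemma fracDiff_const_mul (α : ℝ) (c : ℝ) (u : ℕ → ℝ) (t : ℕ) :
    fracDiff α (fun j => c * u j) t = c * fracDiff α u t := by
  simp only [fracDiff]
  rw [fracSum_const_mul, fracSum_const_mul, fracSum_const_mul]
  ring

/-- If `y` satisfies the Green-function sum representation, then `y` solves the
discrete fractional BVP `Δ^α y(t) + q(t+α-1)·f(y(t+α-1)) = 0`, `t = 0,…,b+1`,
with `y(α-2) = y(α+b+1) = 0`.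
Here `y k` stands for `y(α-2+k)` and `q s` stands for `q(α-1+s)`. -/
theorem statement1 (α : ℝ) (b : ℕ) (hα1 : 1 < α) (hα2 : α ≤ 2) (hb : 2 ≤ b)
    (q : ℕ → ℝ) (f : ℝ → ℝ) (y : ℕ → ℝ)
    (hrep : ∀ k : ℕ, k ≤ b + 3 →
      y k = ∑ s ∈ Finset.range (b + 2), G α b (α - 2 + k) s * q s * f (y (s + 1))) :
    (∀ t : ℕ, t ≤ b + 1 → fracDiff α y t + q t * f (y (t + 1)) = 0) ∧
      y 0 = 0 ∧ y (b + 3) = 0 := by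
  have hΓ : Real.Gamma α ≠ 0 := ne_of_gt (Real.Gamma_pos_of_pos (by linarith))
  set h : ℕ → ℝ := fun s => q s * f (y (s + 1)) with hh
  set c : ℕ → ℝ := fun s =>
    1 / Real.Gamma α * (fp (α + (b:ℝ) - (s:ℝ)) (α-1) / fp (α + (b:ℝ) + 1) (α-1)) with hc
  have hyG : ∀ k : ℕ, k ≤ b + 3 → y k = ∑ s ∈ Finset.range (b + 2),
      h s * (c s * fp (α - 2 + (k:ℝ)) (α-1)
        - (1 / Real.Gamma α) * fp (α - 2 + (k:ℝ) - (s:ℝ) - 1) (α-1)) := by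
    intro k hk
    rw [hrep k hk]
    refine Finset.sum_congr rfl fun s _ => ?_
    rw [G_decomp hα1]
    simp only [hh, hc]
    ring
  refine ⟨?_, ?_, ?_⟩
  · -- main equation
    intro t ht
    have hfd : fracDiff α y t = fracDiff α (fun k => ∑ s ∈ Finset.range (b + 2),
        h s * (c s * fp (α - 2 + (k:ℝ)) (α-1)
          - (1 / Real.Gamma α) * fp (α - 2 + (k:ℝ) - (s:ℝ) - 1) (α-1))) t := by
      simp only [fracDiff]
      rw [fracSum_congr α _ _ (t+2) (fun j hj => hyG j (by omega)),
        fracSum_congr α _ _ (t+1) (fun j hj => hyG j (by omega)),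
        fracSum_congr α _ _ t (fun j hj => hyG j (by omega))]
    rw [hfd, fracDiff_sum]
    have hterm : ∀ s ∈ Finset.range (b + 2),
        fracDiff α (fun k => h s * (c s * fp (α - 2 + (k:ℝ)) (α-1)
          - (1 / Real.Gamma α) * fp (α - 2 + (k:ℝ) - (s:ℝ) - 1) (α-1))) t
        = if t = s then -h s else 0 := by
      intro s _
      rw [fracDiff_const_mul, fracDiff_col hα1 hα2]
      split_ifs <;> ring
    rw [Finset.sum_congr rfl hterm, Finset.sum_ite_eq, if_pos (Finset.mem_range.mpr (by omega))]
    simp only [hh]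
    ring
  · -- y 0 = 0
    rw [hyG 0 (by omega)]
    refine Finset.sum_eq_zero fun s _ => ?_
    have h1 : fp (α - 2 + ((0:ℕ):ℝ)) (α-1) = 0 := by
      apply fp_eq_zero 0; push_cast; ring
    have h2 : fp (α - 2 + ((0:ℕ):ℝ) - (s:ℝ) - 1) (α-1) = 0 := by
      apply fp_eq_zero (s+1); push_cast; ring
    rw [h1, h2]
    ring
  · -- y (b+3) = 0
    rw [hyG (b+3) (by omega)]
    refine Finset.sum_eq_zero fun s _ => ?_
    have hA : fp (α - 2 + (((b:ℕ)+3:ℕ):ℝ)) (α-1) = fp (α + (b:ℝ) + 1) (α-1) := by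
      congr 1; push_cast; ring
    have hB : fp (α - 2 + (((b:ℕ)+3:ℕ):ℝ) - (s:ℝ) - 1) (α-1) = fp (α + (b:ℝ) - (s:ℝ)) (α-1) := by
      congr 1; push_cast; ring
    have hden : fp (α + (b:ℝ) + 1) (α-1) ≠ 0 := by
      rw [fp]
      have hx1 : (0:ℝ) < α + (b:ℝ) + 1 + 1 := by positivity
      have hx2 : (0:ℝ) < α + (b:ℝ) + 1 - (α - 1) + 1 := by
        have : α + (b:ℝ) + 1 - (α - 1) + 1 = (b:ℝ) + 3 := by ring
        rw [this]; positivity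
      exact ne_of_gt (div_pos (Real.Gamma_pos_of_pos hx1) (Real.Gamma_pos_of_pos hx2))
    rw [hA, hB]
    simp only [hc]
    field_simp
    ring
end

section
/- For every t ∈ {α−1+k : k = 0,1,…,b+1} and every integer s ∈ {1,…,b+1}, the Green function satisfies G(t,s) > 0. -/
noncomputable def hfun (α : ℝ) (n : ℕ) : ℝ := Real.Gamma (α - 1 + n) / Real.Gamma n

lemma fp_eq (α : ℝ) (n : ℕ) : fp (α - 2 + n) (α - 1) = hfun α n := by
  unfold fp hfun
  ring_nf

lemma hfun_pos {α : ℝ} (hα : 1 < α) {n : ℕ} (hn : 1 ≤ n) : 0 < hfun α n := by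
  have hn0 : (0:ℝ) < n := by exact_mod_cast hn
  exact div_pos (Real.Gamma_pos_of_pos (by linarith)) (Real.Gamma_pos_of_pos hn0)

lemma hfun_step {α : ℝ} (hα : 1 < α) {n : ℕ} (hn : 1 ≤ n) :
    hfun α (n + 1) = hfun α n * ((α - 1 + n) / n) := by
  have hn0 : (0:ℝ) < n := by exact_mod_cast hn
  have h1 : α - 1 + (n:ℝ) ≠ 0 := by linarith
  unfold hfun
  push_cast
  rw [show α - 1 + ((n:ℝ) + 1) = (α - 1 + n) + 1 by ring, Real.Gamma_add_one h1,
      Real.Gamma_add_one (ne_of_gt hn0)]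
  field_simp

lemma fcomp {α : ℝ} (hα : 1 < α) {a c : ℕ} (ha : 1 ≤ a) (hac : a < c) :
    (α - 1 + c) / c < (α - 1 + a) / a := by
  have ha0 : (0:ℝ) < a := by exact_mod_cast ha
  have hac' : (a:ℝ) < c := by exact_mod_cast hac
  have hc0 : (0:ℝ) < c := lt_trans ha0 hac'
  rw [div_lt_div_iff₀ hc0 ha0]
  nlinarith

lemma fpos {α : ℝ} (hα : 1 < α) {n : ℕ} (hn : 1 ≤ n) : 0 < (α - 1 + n) / n := by
  have hn0 : (0:ℝ) < n := by exact_mod_cast hn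
  exact div_pos (by linarith) hn0

lemma key {α : ℝ} (hα : 1 < α) :
    ∀ d a c : ℕ, 1 ≤ a → a < c →
      hfun α a * hfun α (c + d + 1) < hfun α (a + d + 1) * hfun α c := by
  intro d
  induction d with
  | zero =>
    intro a c ha hac
    have hc : 1 ≤ c := le_trans ha (le_of_lt hac)
    simp only [Nat.add_zero]
    rw [hfun_step hα ha, hfun_step hα hc]
    have hA := hfun_pos hα ha
    have hC := hfun_pos hα hc
    have hf := fcomp hα ha hac
    nlinarith [mul_pos hA hC]
  | succ d ih =>
    intro a c ha hac
    have hc : 1 ≤ c := le_trans ha (le_of_lt hac)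
    have IH := ih a c ha hac
    have ha1 : 1 ≤ a + d + 1 := by omega
    have hc1 : 1 ≤ c + d + 1 := by omega
    have e1 : a + (d + 1) + 1 = (a + d + 1) + 1 := by omega
    have e2 : c + (d + 1) + 1 = (c + d + 1) + 1 := by omega
    rw [e1, e2, hfun_step hα ha1, hfun_step hα hc1]
    have hf := fcomp hα ha1 (by omega : a + d + 1 < c + d + 1)
    have hfp := fpos hα hc1
    have hL : 0 < hfun α a * hfun α (c + d + 1) :=
      mul_pos (hfun_pos hα ha) (hfun_pos hα hc1)
    have := mul_lt_mul'' IH hf (le_of_lt hL) (le_of_lt hfp)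
    nlinarith [this]

/-- Positivity of the Green function: `G(t,s) > 0` for every
`t = α-1+k`, `k = 0,…,b+1`, and every integer `s ∈ {1,…,b+1}`. -/
theorem statement2 (α : ℝ) (b : ℕ) (hα1 : 1 < α) (hα2 : α ≤ 2) (hb : 2 ≤ b) :
    ∀ k : ℕ, k ≤ b + 1 → ∀ s : ℕ, 1 ≤ s → s ≤ b + 1 → 0 < G α b (α - 1 + k) s := by
  intro k hk s hs1 hs2
  have hgα : 0 < 1 / Real.Gamma α := by
    have := Real.Gamma_pos_of_pos (show (0:ℝ) < α by linarith)
    positivity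
  have e1 : fp (α - 1 + k) (α - 1) = hfun α (k + 1) := by
    rw [show (α - 1 + k : ℝ) = α - 2 + ((k + 1 : ℕ) : ℝ) by push_cast; ring, fp_eq]
  have e2 : fp (α + b - s) (α - 1) = hfun α (b + 2 - s) := by
    rw [show (α + b - s : ℝ) = α - 2 + ((b + 2 - s : ℕ) : ℝ) by
      rw [Nat.cast_sub (by omega : s ≤ b + 2)]; push_cast; ring, fp_eq]
  have e3 : fp (α + b + 1) (α - 1) = hfun α (b + 3) := by
    rw [show (α + b + 1 : ℝ) = α - 2 + ((b + 3 : ℕ) : ℝ) by push_cast; ring, fp_eq]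
  have hb3 : 0 < hfun α (b + 3) := hfun_pos hα1 (by omega)
  have hb2s : 0 < hfun α (b + 2 - s) := hfun_pos hα1 (by omega)
  have hk1 : 0 < hfun α (k + 1) := hfun_pos hα1 (by omega)
  unfold G
  by_cases hsk : s ≤ k
  · have hcond : (s : ℝ) ≤ α - 1 + k - α + 1 := by
      have : (s : ℝ) ≤ k := by exact_mod_cast hsk
      linarith
    rw [if_pos hcond, e1, e2, e3]
    have e4 : fp (α - 1 + k - s - 1) (α - 1) = hfun α (k - s) := by
      rw [show (α - 1 + k - s - 1 : ℝ) = α - 2 + ((k - s : ℕ) : ℝ) by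
        rw [Nat.cast_sub hsk]; push_cast; ring, fp_eq]
    rw [e4]
    apply mul_pos hgα
    rw [sub_pos, lt_div_iff₀ hb3]
    rcases eq_or_lt_of_le hsk with h | h
    · have : hfun α (k - s) = 0 := by
        rw [show k - s = 0 by omega]
        unfold hfun
        simp [Real.Gamma_zero]
      rw [this, zero_mul]
      exact mul_pos hk1 hb2s
    · have hkey := key hα1 s (k - s) (b + 2 - s) (by omega) (by omega)
      rw [show k - s + s + 1 = k + 1 by omega, show b + 2 - s + s + 1 = b + 3 by omega] at hkey
      linarith
  · have hcond : ¬ ((s : ℝ) ≤ α - 1 + k - α + 1) := by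
      push_neg
      have : (k : ℝ) < s := by exact_mod_cast Nat.lt_of_not_le hsk
      linarith
    rw [if_neg hcond, e1, e2, e3]
    exact mul_pos hgα (div_pos (mul_pos hk1 hb2s) hb3)
end

section
/- For every integer s ∈ {1,…,b+1}, the maximum of G(t,s) over t ∈ {α−1+k : k = 0,1,…,b+1} is attained at t = s+α−1; that is, max_{t ∈ {α−1,…,α+b}} G(t,s) = G(s+α−1, s). -/
open Real Finset

section aux
variable (α : ℝ) (b s : ℕ)

lemma fp_ratio (hα1 : 1 < α) (hsb : s ≤ b + 1) :
    fp (α + b - s) (α - 1) / fp (α + b + 1) (α - 1) =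
      Real.Gamma (α + b + 1 - s) * Real.Gamma ((b:ℝ) + 3) /
        (Real.Gamma ((b:ℝ) + 2 - s) * Real.Gamma (α + b + 2)) := by
  simp only [fp]
  rw [show α + (b:ℝ) - s + 1 = α + b + 1 - s by ring,
      show α + (b:ℝ) - s - (α - 1) + 1 = (b:ℝ) + 2 - s by ring,
      show α + (b:ℝ) + 1 + 1 = α + b + 2 by ring,
      show α + (b:ℝ) + 1 - (α - 1) + 1 = (b:ℝ) + 3 by ring]
  simp only [div_eq_mul_inv, mul_inv, inv_inv]
  ring

lemma fp_t (k : ℕ) : fp (α - 1 + k) (α - 1) = Real.Gamma (α + k) / Real.Gamma ((k:ℝ) + 1) := by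
  simp only [fp]
  rw [show α - 1 + (k:ℝ) + 1 = α + k by ring,
      show α - 1 + (k:ℝ) - (α - 1) + 1 = (k:ℝ) + 1 by ring]

lemma G_lt (hα1 : 1 < α) (hsb : s ≤ b + 1) (k : ℕ) (hk : k < s) :
    G α b (α - 1 + k) s =
      1 / Real.Gamma α * (Real.Gamma (α + k) / Real.Gamma ((k:ℝ) + 1) *
        (Real.Gamma (α + b + 1 - s) * Real.Gamma ((b:ℝ) + 3) /
          (Real.Gamma ((b:ℝ) + 2 - s) * Real.Gamma (α + b + 2)))) := by
  have hc : ¬ ((s:ℝ) ≤ α - 1 + k - α + 1) := by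
    rw [show α - 1 + (k:ℝ) - α + 1 = (k:ℝ) by ring]
    exact_mod_cast Nat.not_le.mpr hk
  rw [G, if_neg hc, mul_div_assoc, fp_ratio α b s hα1 hsb, fp_t]

lemma G_ge (hα1 : 1 < α) (hsb : s ≤ b + 1) (j : ℕ) :
    G α b (α - 1 + (s + j : ℕ)) s =
      1 / Real.Gamma α * (Real.Gamma (α + s + j) / Real.Gamma ((s:ℝ) + j + 1) *
        (Real.Gamma (α + b + 1 - s) * Real.Gamma ((b:ℝ) + 3) /
          (Real.Gamma ((b:ℝ) + 2 - s) * Real.Gamma (α + b + 2))) -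
        Real.Gamma (α - 1 + j) / Real.Gamma (j:ℝ)) := by
  have hc : (s:ℝ) ≤ α - 1 + ((s + j : ℕ):ℝ) - α + 1 := by
    push_cast
    have : (0:ℝ) ≤ j := Nat.cast_nonneg j
    linarith
  rw [G, if_pos hc, mul_div_assoc, fp_ratio α b s hα1 hsb, fp_t]
  have e1 : α + ((s + j : ℕ):ℝ) = α + s + j := by push_cast; ring
  have e2 : ((s + j : ℕ):ℝ) + 1 = (s:ℝ) + j + 1 := by push_cast; ring
  rw [e1, e2]
  congr 1
  simp only [fp]
  rw [show α - 1 + ((s + j : ℕ):ℝ) - s - 1 + 1 = α - 1 + j by push_cast; ring,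
      show α - 1 + ((s + j : ℕ):ℝ) - s - 1 - (α - 1) + 1 = (j:ℝ) by push_cast; ring]

end aux

lemma gamma_diff (u v : ℝ) (hu : 0 < u) (hv : 0 < v) :
    Real.Gamma (u+1) / Real.Gamma (v+1) - Real.Gamma u / Real.Gamma v =
      (u - v) * Real.Gamma u / Real.Gamma (v+1) := by
  rw [Real.Gamma_add_one hu.ne', Real.Gamma_add_one hv.ne']
  have h1 := Real.Gamma_pos_of_pos hv
  field_simp

lemma gamma_shift_diff (α : ℝ) (hα1 : 1 < α) (j : ℕ) :
    Real.Gamma (α - 1 + (j+1:ℕ)) / Real.Gamma ((j:ℝ)+1) -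
      Real.Gamma (α - 1 + j) / Real.Gamma (j:ℝ) =
      (α - 1) * Real.Gamma (α - 1 + j) / Real.Gamma ((j:ℝ)+1) := by
  cases j with
  | zero =>
      simp only [Nat.cast_zero, Nat.cast_one, Real.Gamma_zero, div_zero, sub_zero, add_zero,
        zero_add]
      rw [Real.Gamma_one, div_one, div_one, show α - 1 + 1 = (α-1) + 1 by ring,
        Real.Gamma_add_one (by linarith)]
  | succ m =>
      have hu : (0:ℝ) < α - 1 + (m+1:ℕ) := by
        have : (0:ℝ) ≤ (m+1:ℕ) := Nat.cast_nonneg _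
        linarith
      have hv : (0:ℝ) < ((m+1:ℕ):ℝ) := by positivity
      have := gamma_diff (α - 1 + (m+1:ℕ)) ((m+1:ℕ):ℝ) hu hv
      rw [show α - 1 + (m+1:ℕ) + 1 = α - 1 + ((m+1+1:ℕ):ℝ) by push_cast; ring,
        show α - 1 + ((m+1:ℕ):ℝ) - ((m+1:ℕ):ℝ) = α - 1 by ring] at this
      convert this using 3 <;> push_cast <;> ring
lemma gamma_prod (x : ℝ) (hx : 0 < x) (n : ℕ) :
    Real.Gamma (x + n) = (∏ i ∈ Finset.range n, (x + i)) * Real.Gamma x := by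
  induction n with
  | zero => simp
  | succ n ih =>
      have h1 : x + ((n+1 : ℕ) : ℝ) = (x + n) + 1 := by push_cast; ring
      rw [h1, Real.Gamma_add_one (by positivity), ih, Finset.prod_range_succ]
      ring

lemma prod_ineq (α : ℝ) (hα1 : 1 < α) (hα2 : α ≤ 2) (b s j : ℕ) (hk : s + j ≤ b) :
    (∏ i ∈ range (s+1), (α - 1 + j + i)) * (∏ i ∈ range (s+1), ((b:ℝ) + 2 - s + i)) ≤
    (∏ i ∈ range (s+1), ((j:ℝ) + 1 + i)) * (∏ i ∈ range (s+1), (α + b + 1 - s + i)) := by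
  rw [← Finset.prod_mul_distrib, ← Finset.prod_mul_distrib]
  apply Finset.prod_le_prod
  · intro i _
    have h1 : 0 ≤ (j:ℝ) + i := by positivity
    have h2 : (s:ℝ) ≤ b := by exact_mod_cast le_trans (Nat.le_add_right s j) hk
    nlinarith
  · intro i _
    have h2 : (s:ℝ) + j ≤ b := by exact_mod_cast hk
    have h3 : 0 ≤ (j:ℝ) + i := by positivity
    have h4 : 0 ≤ (i:ℝ) := by positivity
    nlinarith

lemma key_ineq (α : ℝ) (hα1 : 1 < α) (hα2 : α ≤ 2) (b s j : ℕ) (hk : s + j ≤ b) :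
    Real.Gamma (α + s + j) * Real.Gamma ((b:ℝ)+3) * Real.Gamma (α+b+1-s) * Real.Gamma ((j:ℝ)+1)
      ≤ Real.Gamma (α-1+j) * Real.Gamma ((s:ℝ)+j+2) * Real.Gamma ((b:ℝ)+2-s) *
        Real.Gamma (α+b+2) := by
  have hsb : (s:ℝ) ≤ b := by exact_mod_cast le_trans (Nat.le_add_right s j) hk
  have p1 : (0:ℝ) < α - 1 + j := by
    have hj : (0:ℝ) ≤ j := Nat.cast_nonneg j
    linarith
  have p2 : (0:ℝ) < (j:ℝ) + 1 := by positivity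
  have p3 : (0:ℝ) < (b:ℝ) + 2 - s := by linarith
  have p4 : (0:ℝ) < α + b + 1 - s := by linarith
  have e1 : α + s + j = (α - 1 + (j:ℝ)) + ((s+1 : ℕ) : ℝ) := by push_cast; ring
  have e2 : (s:ℝ) + j + 2 = ((j:ℝ) + 1) + ((s+1 : ℕ) : ℝ) := by push_cast; ring
  have e3 : (b:ℝ) + 3 = ((b:ℝ) + 2 - s) + ((s+1 : ℕ) : ℝ) := by push_cast; ring
  have e4 : α + b + 2 = (α + b + 1 - s) + ((s+1 : ℕ) : ℝ) := by push_cast; ring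
  rw [e1, e2, e3, e4, gamma_prod _ p1, gamma_prod _ p2, gamma_prod _ p3, gamma_prod _ p4]
  have hK : (0:ℝ) < Real.Gamma (α-1+j) * Real.Gamma ((b:ℝ)+2-s) * Real.Gamma (α+b+1-s) *
      Real.Gamma ((j:ℝ)+1) := by
    have := Real.Gamma_pos_of_pos p1
    have := Real.Gamma_pos_of_pos p2
    have := Real.Gamma_pos_of_pos p3
    have := Real.Gamma_pos_of_pos p4
    positivity
  have hmain := prod_ineq α hα1 hα2 b s j hk
  calc (∏ i ∈ range (s+1), (α - 1 + ↑j + ↑i)) * Real.Gamma (α - 1 + ↑j) *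
        ((∏ i ∈ range (s+1), ((b:ℝ) + 2 - ↑s + ↑i)) * Real.Gamma ((b:ℝ) + 2 - ↑s)) *
        Real.Gamma (α + ↑b + 1 - ↑s) * Real.Gamma ((j:ℝ) + 1)
      = ((∏ i ∈ range (s+1), (α - 1 + ↑j + ↑i)) * (∏ i ∈ range (s+1), ((b:ℝ) + 2 - ↑s + ↑i))) *
        (Real.Gamma (α-1+↑j) * Real.Gamma ((b:ℝ)+2-↑s) * Real.Gamma (α+↑b+1-↑s) *
        Real.Gamma ((j:ℝ)+1)) := by ring
    _ ≤ ((∏ i ∈ range (s+1), ((j:ℝ) + 1 + ↑i)) * (∏ i ∈ range (s+1), (α + ↑b + 1 - ↑s + ↑i))) *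
        (Real.Gamma (α-1+↑j) * Real.Gamma ((b:ℝ)+2-↑s) * Real.Gamma (α+↑b+1-↑s) *
        Real.Gamma ((j:ℝ)+1)) := mul_le_mul_of_nonneg_right hmain hK.le
    _ = Real.Gamma (α-1+↑j) * ((∏ i ∈ range (s+1), ((j:ℝ) + 1 + ↑i)) * Real.Gamma ((j:ℝ)+1)) *
        Real.Gamma ((b:ℝ)+2-↑s) *
        ((∏ i ∈ range (s+1), (α + ↑b + 1 - ↑s + ↑i)) * Real.Gamma (α+↑b+1-↑s)) := by ring


/-- For every integer `s ∈ {1,…,b+1}`, the maximum of `G(t,s)` over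
`t ∈ {α-1+k : k = 0,…,b+1}` is attained at `t = s+α-1`, i.e. it equals
`G(s+α-1, s)`. -/
theorem statement3 (α : ℝ) (b : ℕ) (hα1 : 1 < α) (hα2 : α ≤ 2) (hb : 2 ≤ b) :
    ∀ s : ℕ, 1 ≤ s → s ≤ b + 1 →
      IsGreatest {x : ℝ | ∃ k : ℕ, k ≤ b + 1 ∧ x = G α b (α - 1 + k) s}
        (G α b ((s : ℝ) + α - 1) s) := by
  intro s hs1 hs2
  have hGα : 0 < Real.Gamma α := Real.Gamma_pos_of_pos (by linarith)
  have hsb : (s:ℝ) ≤ (b:ℝ) + 1 := by exact_mod_cast hs2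
  have pc1 : (0:ℝ) < α + b + 1 - s := by linarith
  have pc2 : (0:ℝ) < (b:ℝ) + 2 - s := by linarith
  have pc3 : (0:ℝ) < (b:ℝ) + 3 := by positivity
  have pc4 : (0:ℝ) < α + b + 2 := by positivity
  set c : ℝ := Real.Gamma (α + b + 1 - s) * Real.Gamma ((b:ℝ) + 3) /
      (Real.Gamma ((b:ℝ) + 2 - s) * Real.Gamma (α + b + 2)) with hc
  have hcpos : 0 < c := by
    have := Real.Gamma_pos_of_pos pc1
    have := Real.Gamma_pos_of_pos pc2
    have := Real.Gamma_pos_of_pos pc3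
    have := Real.Gamma_pos_of_pos pc4
    positivity
  set g : ℕ → ℝ := fun k => G α b (α - 1 + k) s with hgdef
  set h : ℕ → ℝ := fun k =>
    1 / Real.Gamma α * (Real.Gamma (α + k) / Real.Gamma ((k:ℝ) + 1) * c) with hhdef
  -- h is monotone
  have hmono : Monotone h := by
    apply monotone_nat_of_le_succ
    intro k
    have hu : (0:ℝ) < α + k := by
      have : (0:ℝ) ≤ (k:ℝ) := Nat.cast_nonneg k
      linarith
    have hv : (0:ℝ) < (k:ℝ) + 1 := by positivity
    have hd := gamma_diff (α + k) ((k:ℝ) + 1) hu hv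
    have hpos : 0 ≤ (α + k - ((k:ℝ)+1)) * Real.Gamma (α + k) / Real.Gamma ((k:ℝ)+1+1) := by
      have h1 := Real.Gamma_pos_of_pos hu
      have h2 : (0:ℝ) < Real.Gamma ((k:ℝ)+1+1) := Real.Gamma_pos_of_pos (by positivity)
      have : (0:ℝ) ≤ α + k - ((k:ℝ)+1) := by linarith
      positivity
    have hle : Real.Gamma (α + k) / Real.Gamma ((k:ℝ) + 1) ≤
        Real.Gamma (α + (k+1:ℕ)) / Real.Gamma (((k+1:ℕ):ℝ) + 1) := by
      rw [show α + ((k+1:ℕ):ℝ) = α + k + 1 by push_cast; ring,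
        show ((k+1:ℕ):ℝ) + 1 = (k:ℝ) + 1 + 1 by push_cast; ring]
      linarith
    simp only [hhdef]
    apply mul_le_mul_of_nonneg_left _ (by positivity)
    exact mul_le_mul_of_nonneg_right hle hcpos.le
  -- g k = h k for k < s
  have hgh : ∀ k, k < s → g k = h k := by
    intro k hk
    simp only [hgdef, hhdef]
    exact G_lt α b s hα1 hs2 k hk
  -- g s = h s
  have hgs : g s = h s := by
    have := G_ge α b s hα1 hs2 0
    simp only [Nat.cast_zero, add_zero, Real.Gamma_zero, div_zero, sub_zero] at this
    simp only [hgdef, hhdef]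
    rw [show s = s + 0 from (Nat.add_zero s).symm] at this ⊢
    rw [this]
    norm_num
    exact Or.inl (Or.inl rfl)
  -- downward step
  have hdown : ∀ j : ℕ, s + j ≤ b → g (s + (j+1)) ≤ g (s + j) := by
    intro j hj
    have hj' : (s:ℝ) + j ≤ b := by exact_mod_cast hj
    have e1 := G_ge α b s hα1 hs2 j
    have e2 := G_ge α b s hα1 hs2 (j+1)
    rw [show α + (s:ℝ) + ((j+1:ℕ):ℝ) = (α + s + j) + 1 by push_cast; ring,
      show (s:ℝ) + ((j+1:ℕ):ℝ) + 1 = ((s:ℝ) + j + 1) + 1 by push_cast; ring] at e2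
    have hu : (0:ℝ) < α + s + j := by
      have h1 : (0:ℝ) ≤ (s:ℝ) := Nat.cast_nonneg s
      have h2 : (0:ℝ) ≤ (j:ℝ) := Nat.cast_nonneg j
      linarith
    have hv : (0:ℝ) < (s:ℝ) + j + 1 := by positivity
    have dR := gamma_diff (α + s + j) ((s:ℝ) + j + 1) hu hv
    have dS := gamma_shift_diff α hα1 j
    -- ratio inequality from key_ineq
    have r1 : Real.Gamma (α + s + j) / Real.Gamma ((s:ℝ) + j + 1 + 1) * c ≤
        Real.Gamma (α - 1 + j) / Real.Gamma ((j:ℝ) + 1) := by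
      rw [hc, div_mul_div_comm, div_le_div_iff₀ (by
          have := Real.Gamma_pos_of_pos pc2
          have := Real.Gamma_pos_of_pos pc4
          have : (0:ℝ) < Real.Gamma ((s:ℝ) + j + 1 + 1) := Real.Gamma_pos_of_pos (by positivity)
          positivity)
        (Real.Gamma_pos_of_pos (by positivity : (0:ℝ) < (j:ℝ) + 1))]
      have hkey := key_ineq α hα1 hα2 b s j (by exact_mod_cast hj)
      calc Real.Gamma (α + s + j) * (Real.Gamma (α + b + 1 - s) * Real.Gamma ((b:ℝ) + 3)) *
            Real.Gamma ((j:ℝ) + 1)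
          = Real.Gamma (α + s + j) * Real.Gamma ((b:ℝ)+3) * Real.Gamma (α+b+1-s) *
            Real.Gamma ((j:ℝ)+1) := by ring
        _ ≤ Real.Gamma (α-1+j) * Real.Gamma ((s:ℝ)+j+2) * Real.Gamma ((b:ℝ)+2-s) *
            Real.Gamma (α+b+2) := hkey
        _ = Real.Gamma (α - 1 + j) * (Real.Gamma ((s:ℝ) + j + 1 + 1) *
            (Real.Gamma ((b:ℝ) + 2 - s) * Real.Gamma (α + b + 2))) := by
            rw [show (s:ℝ) + j + 1 + 1 = (s:ℝ) + j + 2 by ring]; ring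
    simp only [hgdef]
    rw [e1, e2, ← hc]
    apply mul_le_mul_of_nonneg_left _ (by positivity)
    -- reduce to difference inequality
    have hmul := mul_le_mul_of_nonneg_left r1 (by linarith : (0:ℝ) ≤ α - 1)
    have dRc : Real.Gamma (α + s + j + 1) / Real.Gamma ((s:ℝ) + j + 1 + 1) * c -
        Real.Gamma (α + s + j) / Real.Gamma ((s:ℝ) + j + 1) * c =
        (α - 1) * (Real.Gamma (α + s + j) / Real.Gamma ((s:ℝ) + j + 1 + 1) * c) := by
      rw [← sub_mul, dR]; ring
    rw [mul_div_assoc] at dS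
    push_cast at dS ⊢
    linarith [dS, dRc, hmul]
  -- chain down
  have hchain : ∀ j : ℕ, s + j ≤ b + 1 → g (s + j) ≤ g s := by
    intro j
    induction j with
    | zero => intro _; simp
    | succ m ih =>
        intro hm
        have h1 : s + m ≤ b := by omega
        exact le_trans (hdown m h1) (ih (by omega))
  have htarget : G α b ((s:ℝ) + α - 1) s = g s := by
    simp only [hgdef]
    rw [show (s:ℝ) + α - 1 = α - 1 + s by ring]
  constructor
  · exact ⟨s, hs2, htarget⟩
  · rintro x ⟨k, hk, rfl⟩
    rw [htarget]
    rcases le_or_gt s k with hks | hks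
    · obtain ⟨j, rfl⟩ := Nat.exists_eq_add_of_le hks
      exact hchain j (by omega)
    · calc g k = h k := hgh k hks
        _ ≤ h s := hmono hks.le
        _ = g s := hgs.symm
end

section
/- If b is even, then the maximum of G(s+α−1,s) over integer s ∈ {1,…,b+1} equals (1/4)·(b+2α)·(b+2)·Γ(b/2+α)²·Γ(b+3) / ( Γ(α)·Γ(b+α+2)·Γ(b/2+2)² ). -/
noncomputable def Hf (α : ℝ) (b s : ℕ) : ℝ :=
  Real.Gamma ((s : ℝ) + α) * Real.Gamma ((b : ℝ) - s + 1 + α) /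
    (Real.Gamma ((s : ℝ) + 1) * Real.Gamma ((b : ℝ) - s + 2))

lemma Hf_pos (α : ℝ) (b : ℕ) (hα1 : 1 < α) (s : ℕ) (hs : s ≤ b + 1) : 0 < Hf α b s := by
  have hsb : (s : ℝ) ≤ (b : ℝ) + 1 := by exact_mod_cast hs
  have h1 : 0 < Real.Gamma ((s : ℝ) + α) := Real.Gamma_pos_of_pos (by positivity)
  have h2 : 0 < Real.Gamma ((b : ℝ) - s + 1 + α) := Real.Gamma_pos_of_pos (by linarith)
  have h3 : 0 < Real.Gamma ((s : ℝ) + 1) := Real.Gamma_pos_of_pos (by positivity)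
  have h4 : 0 < Real.Gamma ((b : ℝ) - s + 2) := Real.Gamma_pos_of_pos (by linarith)
  exact div_pos (mul_pos h1 h2) (mul_pos h3 h4)

lemma step_id (α : ℝ) (b : ℕ) (hα1 : 1 < α) (s : ℕ) (hs : s ≤ b) :
    Hf α b (s + 1) * (((s : ℝ) + 1) * ((b : ℝ) - s + α)) =
      Hf α b s * (((s : ℝ) + α) * ((b : ℝ) - s + 1)) := by
  have hsb : (s : ℝ) ≤ (b : ℝ) := by exact_mod_cast hs
  unfold Hf
  push_cast
  have g1 : Real.Gamma ((s : ℝ) + 1 + α) = ((s : ℝ) + α) * Real.Gamma ((s : ℝ) + α) := by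
    rw [show (s : ℝ) + 1 + α = ((s : ℝ) + α) + 1 by ring,
      Real.Gamma_add_one (by positivity)]
  have g2 : Real.Gamma ((b : ℝ) - s + 1 + α) = ((b : ℝ) - s + α) * Real.Gamma ((b : ℝ) - s + α) := by
    rw [show (b : ℝ) - s + 1 + α = ((b : ℝ) - s + α) + 1 by ring,
      Real.Gamma_add_one (by intro h; nlinarith)]
  have g3 : Real.Gamma ((s : ℝ) + 1 + 1) = ((s : ℝ) + 1) * Real.Gamma ((s : ℝ) + 1) := by
    rw [show (s : ℝ) + 1 + 1 = ((s : ℝ) + 1) + 1 by ring,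
      Real.Gamma_add_one (by positivity)]
  have g4 : Real.Gamma ((b : ℝ) - s + 2) = ((b : ℝ) - s + 1) * Real.Gamma ((b : ℝ) - s + 1) := by
    rw [show (b : ℝ) - s + 2 = ((b : ℝ) - s + 1) + 1 by ring,
      Real.Gamma_add_one (by intro h; nlinarith)]
  have e1 : (b : ℝ) - ((s : ℝ) + 1) + 1 + α = (b : ℝ) - s + α := by ring
  have e2 : (b : ℝ) - ((s : ℝ) + 1) + 2 = (b : ℝ) - s + 1 := by ring
  rw [e1, e2, g1, g2, g3, g4]
  have n1 : Real.Gamma ((s : ℝ) + 1) ≠ 0 := ne_of_gt (Real.Gamma_pos_of_pos (by positivity))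
  have n2 : Real.Gamma ((b : ℝ) - s + 1) ≠ 0 :=
    ne_of_gt (Real.Gamma_pos_of_pos (by linarith))
  generalize Real.Gamma ((s : ℝ) + α) = A
  generalize Real.Gamma ((b : ℝ) - s + α) = B'
  generalize hC : Real.Gamma ((s : ℝ) + 1) = C at n1
  generalize hD : Real.Gamma ((b : ℝ) - s + 1) = D at n2
  have n3 : (b : ℝ) - s + 1 ≠ 0 := by intro h; nlinarith
  have n4 : (s : ℝ) + 1 ≠ 0 := by positivity
  field_simp

lemma step_up (α : ℝ) (b : ℕ) (hα1 : 1 < α) (s : ℕ) (h2s : 2 * s ≤ b) :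
    Hf α b s ≤ Hf α b (s + 1) := by
  have hs : s ≤ b := le_trans (Nat.le_mul_of_pos_left s (by norm_num)) h2s
  have hsb : (s : ℝ) ≤ (b : ℝ) := by exact_mod_cast hs
  have h2s' : 2 * (s : ℝ) ≤ (b : ℝ) := by exact_mod_cast h2s
  have hP : (0 : ℝ) < ((s : ℝ) + 1) * ((b : ℝ) - s + α) := by nlinarith
  have hQP : ((s : ℝ) + 1) * ((b : ℝ) - s + α) ≤ ((s : ℝ) + α) * ((b : ℝ) - s + 1) := by
    nlinarith
  have h0 : 0 < Hf α b s := Hf_pos α b hα1 s (by omega)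
  have key := step_id α b hα1 s hs
  have : Hf α b s * (((s : ℝ) + 1) * ((b : ℝ) - s + α)) ≤
      Hf α b (s + 1) * (((s : ℝ) + 1) * ((b : ℝ) - s + α)) := by
    rw [key]
    exact mul_le_mul_of_nonneg_left hQP (le_of_lt h0)
  exact le_of_mul_le_mul_right this hP

lemma step_down (α : ℝ) (b : ℕ) (hα1 : 1 < α) (s : ℕ) (h2s : b ≤ 2 * s) (hs : s ≤ b) :
    Hf α b (s + 1) ≤ Hf α b s := by
  have hsb : (s : ℝ) ≤ (b : ℝ) := by exact_mod_cast hs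
  have h2s' : (b : ℝ) ≤ 2 * (s : ℝ) := by exact_mod_cast h2s
  have hP : (0 : ℝ) < ((s : ℝ) + 1) * ((b : ℝ) - s + α) := by nlinarith
  have hQP : ((s : ℝ) + α) * ((b : ℝ) - s + 1) ≤ ((s : ℝ) + 1) * ((b : ℝ) - s + α) := by
    nlinarith
  have h0 : 0 < Hf α b s := Hf_pos α b hα1 s (by omega)
  have key := step_id α b hα1 s hs
  have : Hf α b (s + 1) * (((s : ℝ) + 1) * ((b : ℝ) - s + α)) ≤
      Hf α b s * (((s : ℝ) + 1) * ((b : ℝ) - s + α)) := by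
    rw [key]
    exact mul_le_mul_of_nonneg_left hQP (le_of_lt h0)
  exact le_of_mul_le_mul_right this hP

lemma Hf_max (α : ℝ) (m : ℕ) (hα1 : 1 < α) (s : ℕ) (hs : s ≤ 2 * m + 1) :
    Hf α (2 * m) s ≤ Hf α (2 * m) m := by
  have up : ∀ k, k ≤ m → Hf α (2 * m) (m - k) ≤ Hf α (2 * m) m := by
    intro k
    induction k with
    | zero => intro _; simp
    | succ k ih =>
      intro hk
      have h1 : Hf α (2 * m) (m - (k + 1)) ≤ Hf α (2 * m) (m - (k + 1) + 1) :=
        step_up α (2 * m) hα1 _ (by omega)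
      have h2 : m - (k + 1) + 1 = m - k := by omega
      rw [h2] at h1
      exact le_trans h1 (ih (by omega))
  have down : ∀ k, m + k ≤ 2 * m + 1 → Hf α (2 * m) (m + k) ≤ Hf α (2 * m) m := by
    intro k
    induction k with
    | zero => intro _; simp
    | succ k ih =>
      intro hk
      have h1 : Hf α (2 * m) (m + k + 1) ≤ Hf α (2 * m) (m + k) :=
        step_down α (2 * m) hα1 _ (by omega) (by omega)
      have h2 : m + (k + 1) = m + k + 1 := by omega
      rw [h2]
      exact le_trans h1 (ih (by omega))
  rcases le_or_gt s m with h | h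
  · have := up (m - s) (by omega)
    rwa [show m - (m - s) = s by omega] at this
  · have := down (s - m) (by omega)
    rwa [show m + (s - m) = s by omega] at this

lemma Gval (α : ℝ) (b : ℕ) (hα1 : 1 < α) (s : ℕ) (hs : s ≤ b + 1) :
    G α b ((s : ℝ) + α - 1) s =
      Real.Gamma ((b : ℝ) + 3) / (Real.Gamma α * Real.Gamma ((b : ℝ) + α + 2)) * Hf α b s := by
  have hsb : (s : ℝ) ≤ (b : ℝ) + 1 := by exact_mod_cast hs
  rw [G, if_pos (by linarith)]
  unfold fp Hf
  have e1 : (s : ℝ) + α - 1 + 1 = (s : ℝ) + α := by ring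
  have e2 : (s : ℝ) + α - 1 - (α - 1) + 1 = (s : ℝ) + 1 := by ring
  have e3 : α + (b : ℝ) - s + 1 = (b : ℝ) - s + 1 + α := by ring
  have e4 : α + (b : ℝ) - s - (α - 1) + 1 = (b : ℝ) - s + 2 := by ring
  have e5 : α + (b : ℝ) + 1 + 1 = (b : ℝ) + α + 2 := by ring
  have e6 : α + (b : ℝ) + 1 - (α - 1) + 1 = (b : ℝ) + 3 := by ring
  have e7 : (s : ℝ) + α - 1 - s - 1 + 1 = α - 1 := by ring
  have e8 : (s : ℝ) + α - 1 - s - 1 - (α - 1) + 1 = 0 := by ring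
  rw [e1, e2, e3, e4, e5, e6, e7, e8, Real.Gamma_zero, div_zero, sub_zero]
  have n1 : Real.Gamma α ≠ 0 := ne_of_gt (Real.Gamma_pos_of_pos (by linarith))
  have n2 : Real.Gamma ((s : ℝ) + 1) ≠ 0 := ne_of_gt (Real.Gamma_pos_of_pos (by positivity))
  have n3 : Real.Gamma ((b : ℝ) - s + 2) ≠ 0 :=
    ne_of_gt (Real.Gamma_pos_of_pos (by linarith))
  have n4 : Real.Gamma ((b : ℝ) + α + 2) ≠ 0 :=
    ne_of_gt (Real.Gamma_pos_of_pos (by positivity))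
  have n5 : Real.Gamma ((b : ℝ) + 3) ≠ 0 :=
    ne_of_gt (Real.Gamma_pos_of_pos (by positivity))
  field_simp

/-- If `b` is even, the maximum of `G(s+α-1,s)` over integer `s ∈ {1,…,b+1}` equals
`(1/4)·(b+2α)(b+2)·Γ(b/2+α)²·Γ(b+3) / (Γ(α)·Γ(b+α+2)·Γ(b/2+2)²)`. -/
theorem statement4 (α : ℝ) (b : ℕ) (hα1 : 1 < α) (hα2 : α ≤ 2) (hb : 2 ≤ b)
    (hbe : Even b) :
    IsGreatest {x : ℝ | ∃ s : ℕ, 1 ≤ s ∧ s ≤ b + 1 ∧ x = G α b ((s : ℝ) + α - 1) s}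
      (1 / 4 * (((b : ℝ) + 2 * α) * ((b : ℝ) + 2) * Real.Gamma ((b : ℝ) / 2 + α) ^ 2 *
          Real.Gamma ((b : ℝ) + 3)) /
        (Real.Gamma α * Real.Gamma ((b : ℝ) + α + 2) * Real.Gamma ((b : ℝ) / 2 + 2) ^ 2)) := by
  obtain ⟨m, hm⟩ := hbe
  have hb2 : b = 2 * m := by omega
  subst hb2
  have hm1 : 1 ≤ m := by omega
  have hbr : ((2 * m : ℕ) : ℝ) = 2 * (m : ℝ) := by push_cast; ring
  have hhalf : ((2 * m : ℕ) : ℝ) / 2 = (m : ℝ) := by rw [hbr]; ring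
  -- the target value equals c * Hf α (2m) m
  have hval :
      1 / 4 * ((((2 * m : ℕ) : ℝ) + 2 * α) * (((2 * m : ℕ) : ℝ) + 2) *
            Real.Gamma (((2 * m : ℕ) : ℝ) / 2 + α) ^ 2 * Real.Gamma (((2 * m : ℕ) : ℝ) + 3)) /
          (Real.Gamma α * Real.Gamma (((2 * m : ℕ) : ℝ) + α + 2) *
            Real.Gamma (((2 * m : ℕ) : ℝ) / 2 + 2) ^ 2) =
        Real.Gamma (((2 * m : ℕ) : ℝ) + 3) /
            (Real.Gamma α * Real.Gamma (((2 * m : ℕ) : ℝ) + α + 2)) * Hf α (2 * m) m := by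
    rw [hhalf]
    unfold Hf
    rw [hbr]
    have e1 : 2 * (m : ℝ) - m + 1 + α = ((m : ℝ) + α) + 1 := by ring
    have e2 : 2 * (m : ℝ) - m + 2 = ((m : ℝ) + 1) + 1 := by ring
    have e3 : (m : ℝ) + 2 = ((m : ℝ) + 1) + 1 := by ring
    rw [e1, e2, e3, Real.Gamma_add_one (show (m : ℝ) + α ≠ 0 by positivity),
      Real.Gamma_add_one (show (m : ℝ) + 1 ≠ 0 by positivity)]
    have n1 : Real.Gamma α ≠ 0 := ne_of_gt (Real.Gamma_pos_of_pos (by linarith))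
    have n2 : Real.Gamma ((m : ℝ) + 1) ≠ 0 := ne_of_gt (Real.Gamma_pos_of_pos (by positivity))
    have n3 : Real.Gamma (2 * (m : ℝ) + α + 2) ≠ 0 :=
      ne_of_gt (Real.Gamma_pos_of_pos (by positivity))
    have hm1' : (1 : ℝ) ≤ (m : ℝ) := by exact_mod_cast hm1
    field_simp
    ring
  rw [hval]
  constructor
  · exact ⟨m, hm1, by omega, (Gval α (2 * m) hα1 m (by omega)).symm⟩
  · rintro x ⟨s, hs1, hs2, rfl⟩
    rw [Gval α (2 * m) hα1 s hs2]
    have hc : 0 < Real.Gamma (((2 * m : ℕ) : ℝ) + 3) /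
        (Real.Gamma α * Real.Gamma (((2 * m : ℕ) : ℝ) + α + 2)) := by
      apply div_pos (Real.Gamma_pos_of_pos (by positivity))
      exact mul_pos (Real.Gamma_pos_of_pos (by linarith))
        (Real.Gamma_pos_of_pos (by positivity))
    exact mul_le_mul_of_nonneg_left (Hf_max α m hα1 s hs2) (le_of_lt hc)
end

section
/- Let q : {α−1+s : s = 0,…,b+1} → [0,∞), let λ ∈ (0,1) satisfy min_{t ∈ I} G(t,s) ≥ λ·G(s+α−1,s) for every integer s ∈ {0,1,…,b+1}, and assume Σ_{s ∈ S} λ·G(s+α−1,s)·q(s+α−1) > 0, where S := { integer s : (b+α)/4 ≤ s ≤ 3(b+α)/4 }, so that γ* := ( Σ_{s ∈ S} λ·G(s+α−1,s)·q(s+α−1) )^{−1} is defined. Let r₁ > 0, let f : [0,∞) → [0,∞) satisfy f(x) ≥ γ*·r₁ for all x ∈ [0,r₁], and let y : T_b → ℝ satisfy 0 ≤ y(s+α−1) ≤ r₁ for all s ∈ {0,…,b+1}. Then for every t ∈ I, Σ_{s=0}^{b+1} G(t,s)·q(s+α−1)·f(y(s+α−1)) ≥ r₁. -/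

lemma fp_pos {x y : ℝ} (h1 : 0 < x + 1) (h2 : 0 < x - y + 1) : 0 < fp x y :=
  div_pos (Real.Gamma_pos_of_pos h1) (Real.Gamma_pos_of_pos h2)

/-- Lower-bound estimate used in the existence proof: under hypothesis `(H₁)`,
`f(x) ≥ γ*·r₁` on `[0,r₁]`, where
`γ* = (Σ_{s ∈ S} λ·G(s+α-1,s)·q(s+α-1))⁻¹` and
`S = {s ∈ ℕ : (b+α)/4 ≤ s ≤ 3(b+α)/4}`, one has
`Σ_{s=0}^{b+1} G(t,s)·q(s+α-1)·f(y(s+α-1)) ≥ r₁` for all `t ∈ I`.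
Here `y k` stands for `y(α-2+k)` and `q s` stands for `q(α-1+s)`. -/
theorem statement8 (α : ℝ) (b : ℕ) (hα1 : 1 < α) (hα2 : α ≤ 2) (hb : 2 ≤ b)
    (q : ℕ → ℝ) (hq : ∀ s : ℕ, s ≤ b + 1 → 0 ≤ q s)
    (lam : ℝ) (hlam : lam ∈ Set.Ioo (0 : ℝ) 1)
    (hG : ∀ s : ℕ, s ≤ b + 1 →
      ∀ k : ℕ, k ≤ b + 1 → (b + α) / 4 ≤ α - 1 + k → α - 1 + k ≤ 3 * (b + α) / 4 →
        lam * G α b ((s : ℝ) + α - 1) s ≤ G α b (α - 1 + k) s)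
    (hS : 0 < ∑ s ∈ (Finset.range (b + 2)).filter
        (fun s : ℕ => (b + α) / 4 ≤ (s : ℝ) ∧ (s : ℝ) ≤ 3 * (b + α) / 4),
        lam * G α b ((s : ℝ) + α - 1) s * q s)
    (r₁ : ℝ) (hr₁ : 0 < r₁)
    (f : ℝ → ℝ) (hf0 : ∀ x : ℝ, 0 ≤ x → 0 ≤ f x)
    (hf : ∀ x : ℝ, 0 ≤ x → x ≤ r₁ →
      (∑ s ∈ (Finset.range (b + 2)).filter
          (fun s : ℕ => (b + α) / 4 ≤ (s : ℝ) ∧ (s : ℝ) ≤ 3 * (b + α) / 4),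
          lam * G α b ((s : ℝ) + α - 1) s * q s)⁻¹ * r₁ ≤ f x)
    (y : ℕ → ℝ) (hy : ∀ s : ℕ, s ≤ b + 1 → 0 ≤ y (s + 1) ∧ y (s + 1) ≤ r₁) :
    ∀ k : ℕ, k ≤ b + 1 → (b + α) / 4 ≤ α - 1 + k → α - 1 + k ≤ 3 * (b + α) / 4 →
      r₁ ≤ ∑ s ∈ Finset.range (b + 2), G α b (α - 1 + k) s * q s * f (y (s + 1)) := by
  intro k hk hk1 hk2
  set S := (Finset.range (b + 2)).filter
      (fun s : ℕ => (b + α) / 4 ≤ (s : ℝ) ∧ (s : ℝ) ≤ 3 * (b + α) / 4) with hSdef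
  set Sg := ∑ s ∈ S, lam * G α b ((s : ℝ) + α - 1) s * q s with hSgdef
  have hGpos : ∀ s : ℕ, s ≤ b + 1 → 0 < G α b ((s : ℝ) + α - 1) s := by
    intro s hs
    have hsr : (s : ℝ) ≤ (b : ℝ) + 1 := by exact_mod_cast hs
    unfold G
    rw [if_pos (by linarith)]
    have h0 : fp ((s : ℝ) + α - 1 - s - 1) (α - 1) = 0 := by
      unfold fp
      have h1 : (s : ℝ) + α - 1 - s - 1 - (α - 1) + 1 = 0 := by ring
      rw [h1, Real.Gamma_zero, div_zero]
    rw [h0, sub_zero]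
    have p1 : 0 < fp ((s : ℝ) + α - 1) (α - 1) := fp_pos (by linarith) (by
      have : (s : ℝ) + α - 1 - (α - 1) + 1 = s + 1 := by ring
      rw [this]; positivity)
    have p2 : 0 < fp (α + b - s) (α - 1) := fp_pos (by linarith) (by
      have : α + b - s - (α - 1) + 1 = (b : ℝ) - s + 2 := by ring
      rw [this]; linarith)
    have p3 : 0 < fp (α + (b : ℝ) + 1) (α - 1) := fp_pos (by linarith) (by
      have : α + (b : ℝ) + 1 - (α - 1) + 1 = (b : ℝ) + 3 := by ring
      rw [this]; positivity)
    have hΓα : 0 < Real.Gamma α := Real.Gamma_pos_of_pos (by linarith)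
    positivity
  have hSgpos : 0 < Sg := hS
  have hγr : 0 < Sg⁻¹ * r₁ := mul_pos (inv_pos.mpr hSgpos) hr₁
  have key : ∀ s ∈ S, lam * G α b ((s : ℝ) + α - 1) s * q s * (Sg⁻¹ * r₁)
      ≤ G α b (α - 1 + k) s * q s * f (y (s + 1)) := by
    intro s hsS
    rw [hSdef, Finset.mem_filter, Finset.mem_range] at hsS
    have hs : s ≤ b + 1 := by omega
    have hG' := hG s hs k hk hk1 hk2
    have hq' := hq s hs
    have hy' := hy s hs
    have hf' := hf (y (s + 1)) hy'.1 hy'.2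
    have hGt : 0 ≤ G α b (α - 1 + k) s :=
      le_trans (le_of_lt (mul_pos hlam.1 (hGpos s hs))) hG'
    exact mul_le_mul (mul_le_mul_of_nonneg_right hG' hq') hf' (le_of_lt hγr)
      (mul_nonneg hGt hq')
  calc r₁ = Sg * (Sg⁻¹ * r₁) := by
        rw [← mul_assoc, mul_inv_cancel₀ (ne_of_gt hSgpos), one_mul]
    _ = ∑ s ∈ S, lam * G α b ((s : ℝ) + α - 1) s * q s * (Sg⁻¹ * r₁) := by
        rw [hSgdef, Finset.sum_mul]
    _ ≤ ∑ s ∈ S, G α b (α - 1 + k) s * q s * f (y (s + 1)) := Finset.sum_le_sum key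
    _ ≤ ∑ s ∈ Finset.range (b + 2), G α b (α - 1 + k) s * q s * f (y (s + 1)) := by
        apply Finset.sum_le_sum_of_subset_of_nonneg (Finset.filter_subset _ _)
        intro s hs _
        rw [Finset.mem_range] at hs
        have hs' : s ≤ b + 1 := by omega
        have hGt : 0 ≤ G α b (α - 1 + k) s :=
          le_trans (le_of_lt (mul_pos hlam.1 (hGpos s hs'))) (hG s hs' k hk hk1 hk2)
        exact mul_nonneg (mul_nonneg hGt (hq s hs')) (hf0 _ (hy s hs').1)
end

section
/- Let q : {α−1+s : s = 0,…,b+1} → [0,∞) with Σ_{s=0}^{b+1} G(s+α−1,s)·q(s+α−1) > 0, so that γ := ( Σ_{s=0}^{b+1} G(s+α−1,s)·q(s+α−1) )^{−1} is defined. Let r₂ > 0, let f : [0,∞) → [0,∞) satisfy f(x) ≤ γ·r₂ for all x ∈ [0,r₂], and let y : T_b → ℝ satisfy 0 ≤ y(s+α−1) ≤ r₂ for all s ∈ {0,…,b+1}. Then for every t ∈ {α−1+k : k = 0,…,b+1}, Σ_{s=0}^{b+1} G(t,s)·q(s+α−1)·f(y(s+α−1)) ≤ r₂. -/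
noncomputable def Hh (α : ℝ) (j : ℕ) : ℝ := Real.Gamma (α + j) / Real.Gamma ((j : ℝ) + 1)

noncomputable def Ff (α : ℝ) (j : ℕ) : ℝ := Real.Gamma (α - 1 + j) / Real.Gamma (j : ℝ)

noncomputable def Dd (α : ℝ) (j : ℕ) : ℝ := (α - 1) * (Real.Gamma (α + j) / Real.Gamma ((j : ℝ) + 2))

noncomputable def Ee (α : ℝ) (j : ℕ) : ℝ := (α - 1) * (Real.Gamma (α - 1 + j) / Real.Gamma ((j : ℝ) + 1))

lemma gp {x : ℝ} (h : 0 < x) : 0 < Real.Gamma x := Real.Gamma_pos_of_pos h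

lemma fp_eval (x y a c : ℝ) (h1 : x + 1 = a) (h2 : x - y + 1 = c) :
    fp x y = Real.Gamma a / Real.Gamma c := by rw [fp, h1, h2]

lemma Hh_pos {α : ℝ} (hα : 1 < α) (j : ℕ) : 0 < Hh α j := by
  have hj : (0:ℝ) ≤ j := Nat.cast_nonneg j
  exact div_pos (gp (by linarith)) (gp (by linarith))

lemma Hh_succ {α : ℝ} (hα : 1 < α) (j : ℕ) :
    Hh α (j + 1) = ((α + j) / ((j : ℝ) + 1)) * Hh α j := by
  have hj : (0:ℝ) ≤ j := Nat.cast_nonneg j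
  unfold Hh
  push_cast
  rw [show α + ((j:ℝ) + 1) = (α + (j:ℝ)) + 1 by ring,
    Real.Gamma_add_one (by linarith : (0:ℝ) < α + j).ne',
    show (j:ℝ) + 1 + 1 = ((j:ℝ) + 1) + 1 by ring,
    Real.Gamma_add_one (by linarith : (0:ℝ) < (j:ℝ) + 1).ne']
  field_simp

lemma Hh_mono {α : ℝ} (hα : 1 < α) {k m : ℕ} (h : k ≤ m) : Hh α k ≤ Hh α m := by
  induction m, h using Nat.le_induction with
  | base => exact le_refl _
  | succ n hn ih =>
    refine ih.trans ?_
    rw [Hh_succ hα n]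
    have hn0 : (0:ℝ) ≤ n := Nat.cast_nonneg n
    have h1 : (1:ℝ) ≤ (α + n) / ((n : ℝ) + 1) := by
      rw [le_div_iff₀ (by linarith)]
      linarith
    nlinarith [Hh_pos hα n]

lemma Hh_succ_eq {α : ℝ} (hα : 1 < α) (j : ℕ) :
    Hh α (j + 1) = Hh α j + Dd α j := by
  have hj : (0:ℝ) ≤ j := Nat.cast_nonneg j
  have hg1 : (0:ℝ) < Real.Gamma (α + j) := gp (by linarith)
  have hg2 : (0:ℝ) < Real.Gamma ((j:ℝ) + 1) := gp (by linarith)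
  rw [Hh_succ hα j]
  unfold Hh Dd
  rw [show (j:ℝ) + 2 = ((j:ℝ) + 1) + 1 by ring,
    Real.Gamma_add_one (by linarith : (0:ℝ) < (j:ℝ) + 1).ne']
  field_simp
  ring

lemma Ff_succ {α : ℝ} (hα : 1 < α) (j : ℕ) :
    Ff α (j + 1) = Ff α j + Ee α j := by
  unfold Ff Ee
  cases j with
  | zero =>
    push_cast
    rw [Real.Gamma_add_one (by linarith : (0:ℝ) < α - 1).ne', Real.Gamma_zero, div_zero]
    norm_num [Real.Gamma_one]
  | succ i =>
    push_cast
    have hi : (0:ℝ) ≤ i := Nat.cast_nonneg i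
    have hg2 : (0:ℝ) < Real.Gamma ((i:ℝ) + 1) := gp (by linarith)
    rw [show α - 1 + ((i:ℝ) + 1 + 1) = (α - 1 + ((i:ℝ) + 1)) + 1 by ring,
      Real.Gamma_add_one (by linarith : (0:ℝ) < α - 1 + ((i:ℝ) + 1)).ne',
      show (i:ℝ) + 1 + 1 = ((i:ℝ) + 1) + 1 by ring,
      Real.Gamma_add_one (by linarith : (0:ℝ) < (i:ℝ) + 1).ne']
    field_simp
    ring

lemma key_prod (α : ℝ) (hα1 : 1 < α) (hα2 : α ≤ 2) (j m : ℕ) (hjm : j ≤ m) (s : ℕ) :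
    Real.Gamma (α + j + s) * Real.Gamma (α + m + 1) * Real.Gamma ((m:ℝ) + s + 3) *
        Real.Gamma ((j:ℝ) + 1)
      ≤ Real.Gamma (α - 1 + j) * Real.Gamma ((j:ℝ) + s + 2) * Real.Gamma ((m:ℝ) + 2) *
        Real.Gamma (α + m + s + 2) := by
  have hj : (0:ℝ) ≤ j := Nat.cast_nonneg j
  have hm : (0:ℝ) ≤ m := Nat.cast_nonneg m
  have hjm' : (j:ℝ) ≤ m := Nat.cast_le.mpr hjm
  induction s with
  | zero =>
    simp only [Nat.cast_zero, add_zero]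
    rw [show α + (j:ℝ) = (α - 1 + j) + 1 by ring,
      Real.Gamma_add_one (by linarith : (0:ℝ) < α - 1 + j).ne',
      show (m:ℝ) + 3 = ((m:ℝ) + 2) + 1 by ring,
      Real.Gamma_add_one (by linarith : (0:ℝ) < (m:ℝ) + 2).ne',
      show (j:ℝ) + 2 = ((j:ℝ) + 1) + 1 by ring,
      Real.Gamma_add_one (by linarith : (0:ℝ) < (j:ℝ) + 1).ne',
      show α + (m:ℝ) + 2 = (α + m + 1) + 1 by ring,
      Real.Gamma_add_one (by linarith : (0:ℝ) < α + m + 1).ne']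
    have g1 : 0 < Real.Gamma (α - 1 + j) := gp (by linarith)
    have g2 : 0 < Real.Gamma (α + (m:ℝ) + 1) := gp (by linarith)
    have g3 : 0 < Real.Gamma ((m:ℝ) + 2) := gp (by linarith)
    have g4 : 0 < Real.Gamma ((j:ℝ) + 1) := gp (by linarith)
    have hco : (α - 1 + j) * ((m:ℝ) + 2) ≤ ((j:ℝ) + 1) * (α + m + 1) := by
      nlinarith [mul_nonneg (by linarith : (0:ℝ) ≤ 2 - α)
        (by linarith : (0:ℝ) ≤ (m:ℝ) + 1 - j)]
    have hP : 0 < Real.Gamma (α - 1 + (j:ℝ)) * Real.Gamma (α + (m:ℝ) + 1) *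
        Real.Gamma ((m:ℝ) + 2) * Real.Gamma ((j:ℝ) + 1) := by positivity
    nlinarith [mul_le_mul_of_nonneg_right hco hP.le]
  | succ n ih =>
    have hn : (0:ℝ) ≤ n := Nat.cast_nonneg n
    push_cast
    rw [show α + (j:ℝ) + ((n:ℝ) + 1) = (α + j + n) + 1 by ring,
      Real.Gamma_add_one (by linarith : (0:ℝ) < α + (j:ℝ) + n).ne',
      show (m:ℝ) + ((n:ℝ) + 1) + 3 = ((m:ℝ) + n + 3) + 1 by ring,
      Real.Gamma_add_one (by linarith : (0:ℝ) < (m:ℝ) + n + 3).ne',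
      show (j:ℝ) + ((n:ℝ) + 1) + 2 = ((j:ℝ) + n + 2) + 1 by ring,
      Real.Gamma_add_one (by linarith : (0:ℝ) < (j:ℝ) + n + 2).ne',
      show α + (m:ℝ) + ((n:ℝ) + 1) + 2 = (α + m + n + 2) + 1 by ring,
      Real.Gamma_add_one (by linarith : (0:ℝ) < α + (m:ℝ) + n + 2).ne']
    have g1 : 0 < Real.Gamma (α + (j:ℝ) + n) := gp (by linarith)
    have g2 : 0 < Real.Gamma (α + (m:ℝ) + 1) := gp (by linarith)
    have g3 : 0 < Real.Gamma ((m:ℝ) + n + 3) := gp (by linarith)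
    have g4 : 0 < Real.Gamma ((j:ℝ) + 1) := gp (by linarith)
    have hc : (α + (j:ℝ) + n) * ((m:ℝ) + n + 3) ≤ ((j:ℝ) + n + 2) * (α + m + n + 2) := by
      nlinarith [mul_nonneg (by linarith : (0:ℝ) ≤ 2 - α)
        (by linarith : (0:ℝ) ≤ (m:ℝ) + 1 - j)]
    have hL : 0 < Real.Gamma (α + (j:ℝ) + n) * Real.Gamma (α + (m:ℝ) + 1) *
        Real.Gamma ((m:ℝ) + n + 3) * Real.Gamma ((j:ℝ) + 1) := by positivity
    have hcc : (0:ℝ) ≤ ((j:ℝ) + n + 2) * (α + m + n + 2) :=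
      mul_nonneg (by linarith) (by linarith)
    have key := mul_le_mul hc ih hL.le hcc
    nlinarith [key]

lemma frac_le {a b c d e f g h : ℝ} (hb : 0 < b) (hd : 0 < d) (he : 0 < e) (hf : 0 < f)
    (hh : 0 < h) (hprod : a * c * f * h ≤ g * (b * d * e)) :
    a / b * (c / d / (e / f)) ≤ g / h := by
  have e1 : a / b * (c / d / (e / f)) = a * c * f / (b * d * e) := by
    field_simp
  rw [e1, div_le_div_iff₀ (by positivity) hh]
  nlinarith [hprod]

lemma key_div (α : ℝ) (hα1 : 1 < α) (hα2 : α ≤ 2) (b s j : ℕ) (hsb : s + j ≤ b) :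
    Dd α (s + j) * (Real.Gamma (α + ↑b - ↑s + 1) / Real.Gamma ((b:ℝ) - ↑s + 2) /
      (Real.Gamma (α + ↑b + 2) / Real.Gamma ((b:ℝ) + 3))) ≤ Ee α j := by
  have hj : (0:ℝ) ≤ j := Nat.cast_nonneg j
  have hs0 : (0:ℝ) ≤ s := Nat.cast_nonneg s
  obtain ⟨m, hm⟩ : ∃ m, b = s + j + m := ⟨b - (s + j), by omega⟩
  have hm0 : (0:ℝ) ≤ m := Nat.cast_nonneg m
  have hbR : (b:ℝ) = ↑s + ↑j + ↑m := by rw [hm]; push_cast; ring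
  have hsj : ((s + j : ℕ):ℝ) = ↑s + ↑j := by push_cast; ring
  have hkey := key_prod α hα1 hα2 j (j + m) (Nat.le_add_right j m) s
  push_cast at hkey
  unfold Dd Ee
  rw [mul_assoc]
  refine mul_le_mul_of_nonneg_left ?_ (by linarith : (0:ℝ) ≤ α - 1)
  rw [hsj, hbR]
  refine frac_le (gp (by linarith)) (gp (by linarith)) (gp (by linarith)) (gp (by linarith))
    (gp (by linarith)) ?_
  rw [show α + (↑s + ↑j) = α + ↑j + ↑s by ring,
    show α + (↑s + ↑j + ↑m) - ↑s + 1 = α + (↑j + ↑m) + 1 by ring,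
    show (↑s:ℝ) + ↑j + ↑m + 3 = ↑j + ↑m + ↑s + 3 by ring,
    show (↑s:ℝ) + ↑j + 2 = ↑j + ↑s + 2 by ring,
    show (↑s:ℝ) + ↑j + ↑m - ↑s + 2 = ↑j + ↑m + 2 by ring,
    show α + (↑s + ↑j + ↑m) + 2 = α + (↑j + ↑m) + ↑s + 2 by ring]
  nlinarith [hkey]

lemma G_right (α : ℝ) (hα1 : 1 < α) (b s j : ℕ) :
    G α b (α - 1 + ↑(s + j)) s =
      1 / Real.Gamma α * (Hh α (s + j) *
        (Real.Gamma (α + ↑b - ↑s + 1) / Real.Gamma ((b:ℝ) - ↑s + 2) /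
          (Real.Gamma (α + ↑b + 2) / Real.Gamma ((b:ℝ) + 3))) - Ff α j) := by
  have hsj : ((s + j : ℕ):ℝ) = ↑s + ↑j := by push_cast; ring
  have hj : (0:ℝ) ≤ j := Nat.cast_nonneg j
  rw [G, if_pos (by rw [hsj]; linarith : (↑s:ℝ) ≤ α - 1 + ↑(s + j) - α + 1)]
  rw [fp_eval (α - 1 + ↑(s + j)) (α - 1) (α + ↑(s + j)) (↑(s + j) + 1) (by ring) (by ring),
    fp_eval (α + ↑b - ↑s) (α - 1) (α + ↑b - ↑s + 1) ((b:ℝ) - ↑s + 2) (by ring) (by ring),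
    fp_eval (α + ↑b + 1) (α - 1) (α + ↑b + 2) ((b:ℝ) + 3) (by ring) (by ring),
    fp_eval (α - 1 + ↑(s + j) - ↑s - 1) (α - 1) (α - 1 + ↑j) (↑j) (by rw [hsj]; ring)
      (by rw [hsj]; ring)]
  unfold Hh Ff
  ring

lemma G_left (α : ℝ) (hα1 : 1 < α) (b s k : ℕ) (h : k < s) :
    G α b (α - 1 + ↑k) s =
      1 / Real.Gamma α * (Hh α k *
        (Real.Gamma (α + ↑b - ↑s + 1) / Real.Gamma ((b:ℝ) - ↑s + 2) /
          (Real.Gamma (α + ↑b + 2) / Real.Gamma ((b:ℝ) + 3)))) := by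
  have hks : (k:ℝ) < s := Nat.cast_lt.mpr h
  rw [G, if_neg (by intro hc; linarith : ¬ ((↑s:ℝ) ≤ α - 1 + ↑k - α + 1))]
  rw [fp_eval (α - 1 + ↑k) (α - 1) (α + ↑k) (↑k + 1) (by ring) (by ring),
    fp_eval (α + ↑b - ↑s) (α - 1) (α + ↑b - ↑s + 1) ((b:ℝ) - ↑s + 2) (by ring) (by ring),
    fp_eval (α + ↑b + 1) (α - 1) (α + ↑b + 2) ((b:ℝ) + 3) (by ring) (by ring)]
  unfold Hh
  ring

lemma G_diag (α : ℝ) (hα1 : 1 < α) (b s : ℕ) :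
    G α b (↑s + α - 1) s =
      1 / Real.Gamma α * (Hh α s *
        (Real.Gamma (α + ↑b - ↑s + 1) / Real.Gamma ((b:ℝ) - ↑s + 2) /
          (Real.Gamma (α + ↑b + 2) / Real.Gamma ((b:ℝ) + 3)))) := by
  rw [G, if_pos (by linarith : (↑s:ℝ) ≤ ↑s + α - 1 - α + 1)]
  rw [fp_eval (↑s + α - 1) (α - 1) (α + ↑s) (↑s + 1) (by ring) (by ring),
    fp_eval (α + ↑b - ↑s) (α - 1) (α + ↑b - ↑s + 1) ((b:ℝ) - ↑s + 2) (by ring) (by ring),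
    fp_eval (α + ↑b + 1) (α - 1) (α + ↑b + 2) ((b:ℝ) + 3) (by ring) (by ring),
    fp_eval (↑s + α - 1 - ↑s - 1) (α - 1) (α - 1) 0 (by ring) (by ring),
    Real.Gamma_zero, div_zero]
  unfold Hh
  ring

lemma A_pos (α : ℝ) (hα1 : 1 < α) (b s : ℕ) (hs : s ≤ b + 1) :
    0 < Real.Gamma (α + ↑b - ↑s + 1) / Real.Gamma ((b:ℝ) - ↑s + 2) /
      (Real.Gamma (α + ↑b + 2) / Real.Gamma ((b:ℝ) + 3)) := by
  have h1 : (s:ℝ) ≤ (b:ℝ) + 1 := by exact_mod_cast hs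
  have hb0 : (0:ℝ) ≤ b := Nat.cast_nonneg b
  exact div_pos (div_pos (gp (by linarith)) (gp (by linarith)))
    (div_pos (gp (by linarith)) (gp (by linarith)))

lemma G_diag_nonneg (α : ℝ) (hα1 : 1 < α) (b s : ℕ) (hs : s ≤ b + 1) :
    0 ≤ G α b (↑s + α - 1) s := by
  rw [G_diag α hα1 b s]
  have hΓ : 0 < Real.Gamma α := gp (by linarith)
  exact mul_nonneg (by positivity) (mul_nonneg (Hh_pos hα1 s).le (A_pos α hα1 b s hs).le)

lemma G_le (α : ℝ) (hα1 : 1 < α) (hα2 : α ≤ 2) (b k s : ℕ) (hk : k ≤ b + 1) (hs : s ≤ b + 1) :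
    G α b (α - 1 + ↑k) s ≤ G α b (↑s + α - 1) s := by
  have hΓα : 0 < Real.Gamma α := gp (by linarith)
  have hc : (0:ℝ) ≤ 1 / Real.Gamma α := by positivity
  have hA := A_pos α hα1 b s hs
  rcases lt_or_ge k s with h | h
  · rw [G_left α hα1 b s k h, G_diag α hα1 b s]
    refine mul_le_mul_of_nonneg_left ?_ hc
    exact mul_le_mul_of_nonneg_right (Hh_mono hα1 h.le) hA.le
  · obtain ⟨j, rfl⟩ := Nat.exists_eq_add_of_le h
    have main : ∀ i, s + i ≤ b + 1 → G α b (α - 1 + ↑(s + i)) s ≤ G α b (↑s + α - 1) s := by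
      intro i
      induction i with
      | zero =>
        intro _
        rw [G_right α hα1 b s 0, G_diag α hα1 b s]
        have hF0 : Ff α 0 = 0 := by simp [Ff, Real.Gamma_zero]
        rw [hF0, sub_zero]
        exact le_of_eq rfl
      | succ n ih =>
        intro hn1
        have hstep : G α b (α - 1 + ↑(s + (n + 1))) s ≤ G α b (α - 1 + ↑(s + n)) s := by
          rw [G_right α hα1 b s (n + 1), G_right α hα1 b s n]
          refine mul_le_mul_of_nonneg_left ?_ hc
          rw [← Nat.add_assoc s n 1, Hh_succ_eq hα1 (s + n), Ff_succ hα1 n]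
          have hkd := key_div α hα1 hα2 b s n (by omega)
          nlinarith [hkd]
        exact hstep.trans (ih (by omega))
    exact main j hk

/-- Upper-bound estimate used in the existence proof: under hypothesis `(H₂)`,
`f(x) ≤ γ·r₂` on `[0,r₂]`, where `γ = (Σ_{s=0}^{b+1} G(s+α-1,s)·q(s+α-1))⁻¹`,
one has `Σ_{s=0}^{b+1} G(t,s)·q(s+α-1)·f(y(s+α-1)) ≤ r₂` for all
`t ∈ {α-1+k : k = 0,…,b+1}`.
Here `y k` stands for `y(α-2+k)` and `q s` stands for `q(α-1+s)`. -/
theorem statement9 (α : ℝ) (b : ℕ) (hα1 : 1 < α) (hα2 : α ≤ 2) (hb : 2 ≤ b)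
    (q : ℕ → ℝ) (hq : ∀ s : ℕ, s ≤ b + 1 → 0 ≤ q s)
    (hγ : 0 < ∑ s ∈ Finset.range (b + 2), G α b ((s : ℝ) + α - 1) s * q s)
    (r₂ : ℝ) (hr₂ : 0 < r₂)
    (f : ℝ → ℝ) (hf0 : ∀ x : ℝ, 0 ≤ x → 0 ≤ f x)
    (hf : ∀ x : ℝ, 0 ≤ x → x ≤ r₂ →
      f x ≤ (∑ s ∈ Finset.range (b + 2), G α b ((s : ℝ) + α - 1) s * q s)⁻¹ * r₂)
    (y : ℕ → ℝ) (hy : ∀ s : ℕ, s ≤ b + 1 → 0 ≤ y (s + 1) ∧ y (s + 1) ≤ r₂) :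
    ∀ k : ℕ, k ≤ b + 1 →
      ∑ s ∈ Finset.range (b + 2), G α b (α - 1 + k) s * q s * f (y (s + 1)) ≤ r₂ := by
  intro k hk
  set S := ∑ s ∈ Finset.range (b + 2), G α b ((s : ℝ) + α - 1) s * q s with hS
  have hM : (0:ℝ) ≤ S⁻¹ * r₂ := mul_nonneg (inv_nonneg.mpr hγ.le) hr₂.le
  calc ∑ s ∈ Finset.range (b + 2), G α b (α - 1 + k) s * q s * f (y (s + 1))
      ≤ ∑ s ∈ Finset.range (b + 2), G α b ((s : ℝ) + α - 1) s * q s * (S⁻¹ * r₂) := by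
        refine Finset.sum_le_sum ?_
        intro s hsmem
        have hs' : s ≤ b + 1 := by
          have := Finset.mem_range.mp hsmem; omega
        have hy' := hy s hs'
        have hf1 : 0 ≤ f (y (s + 1)) := hf0 _ hy'.1
        have hf2 : f (y (s + 1)) ≤ S⁻¹ * r₂ := hf _ hy'.1 hy'.2
        have hq' := hq s hs'
        have hGd : 0 ≤ G α b ((s : ℝ) + α - 1) s := G_diag_nonneg α hα1 b s hs'
        have hGle : G α b (α - 1 + ↑k) s ≤ G α b ((s : ℝ) + α - 1) s :=
          G_le α hα1 hα2 b k s hk hs'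
        rcases le_or_gt (G α b (α - 1 + ↑k) s) 0 with hG | hG
        · have h1 : G α b (α - 1 + ↑k) s * q s ≤ 0 := mul_nonpos_iff.mpr (Or.inr ⟨hG, hq'⟩)
          have h2 : G α b (α - 1 + ↑k) s * q s * f (y (s + 1)) ≤ 0 :=
            mul_nonpos_iff.mpr (Or.inr ⟨h1, hf1⟩)
          have h3 : 0 ≤ G α b ((s : ℝ) + α - 1) s * q s * (S⁻¹ * r₂) :=
            mul_nonneg (mul_nonneg hGd hq') hM
          linarith
        · calc G α b (α - 1 + ↑k) s * q s * f (y (s + 1))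
              ≤ G α b (α - 1 + ↑k) s * q s * (S⁻¹ * r₂) :=
                mul_le_mul_of_nonneg_left hf2 (mul_nonneg hG.le hq')
            _ ≤ G α b ((s : ℝ) + α - 1) s * q s * (S⁻¹ * r₂) :=
                mul_le_mul_of_nonneg_right (mul_le_mul_of_nonneg_right hGle hq') hM
    _ = S * (S⁻¹ * r₂) := by rw [hS, ← Finset.sum_mul]
    _ = r₂ := by rw [← mul_assoc, mul_inv_cancel₀ hγ.ne', one_mul]
end
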